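/- Let T and S be commuting continuous surjective self-maps of a compact metric space X such that S is finite-to-one, and let ν be a T-invariant Borel probability measure on X. Then S_*ν is T-invariant and h_{S_*ν}(T) = h_ν(T). -/

import Mathlib

open MeasureTheory

/-- The entropy `H_μ(P) = ∑_{A ∈ P} −μ(A) log μ(A)` of a finite collection of sets. -/
noncomputable def partEntropy {X : Type*} [MeasurableSpace X]
    (μ : Measure X) (P : Finset (Set X)) : ℝ :=
  ∑ A ∈ P, Real.negMulLog (μ A).toReal

/-- The dynamical refinement `P ∨ T⁻¹P ∨ ⋯ ∨ T^{-(n-1)}P` of a finite partition `P`. -/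
noncomputable def dynJoin {X : Type*} (T : X → X) (P : Finset (Set X)) (n : ℕ) :
    Finset (Set X) :=
  letI := Classical.decEq (Set X)
  (Fintype.piFinset fun _ : Fin n => P).image fun f => ⋂ i : Fin n, T^[(i : ℕ)] ⁻¹' f i

/-- `P` is a finite measurable partition of `X`. -/
def IsMeasPartition {X : Type*} [MeasurableSpace X] (P : Finset (Set X)) : Prop :=
  (∀ A ∈ P, MeasurableSet A) ∧ (⋃ A ∈ P, A) = Set.univ ∧
    ∀ A ∈ P, ∀ B ∈ P, A ≠ B → A ∩ B = ∅

/-- The measure-theoretic (Kolmogorov–Sinai) entropy `h_μ(T)`, as the supremum over all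
finite measurable partitions `P` of `lim_n H_μ(P ∨ ⋯ ∨ T^{-(n-1)}P)/n` (the limit equals
the infimum by subadditivity). -/
noncomputable def ksEntropy {X : Type*} [MeasurableSpace X]
    (μ : Measure X) (T : X → X) : ℝ :=
  ⨆ P : {P : Finset (Set X) // IsMeasPartition P},
    ⨅ n : ℕ, partEntropy μ (dynJoin T P.1 (n + 1)) / (n + 1)

/-- The minimal number of `(n, ε)`-Bowen balls needed to cover `F`. -/
noncomputable def bowenCov {X : Type*} [MetricSpace X] (T : X → X) (F : Set X)
    (ε : ℝ) (n : ℕ) : ℕ :=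
  sInf {k : ℕ | ∃ c : Finset X, c.card = k ∧
    F ⊆ ⋃ x ∈ c, {y | ∀ j < n, dist (T^[j] y) (T^[j] x) ≤ ε}}

/-- The topological entropy of `T` on the (invariant) set `F`, via Bowen covers:
`h_top(T|_F) = lim_{ε → 0⁺} limsup_n (1/n) log Cov_F(ε, n)`. -/
noncomputable def topEnt {X : Type*} [MetricSpace X] (T : X → X) (F : Set X) : ℝ :=
  ⨆ ε : {r : ℝ // 0 < r},
    Filter.atTop.limsup fun n : ℕ => Real.log (bowenCov T F ε.1 n) / n

set_option linter.unusedSectionVars false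
set_option maxHeartbeats 1000000
namespace KSProof

/-- Summing a function over the image of a finset, when the function kills collisions. -/
lemma sum_image_eq {ι β : Type*} [DecidableEq β] (s : Finset ι) (g : ι → β) (h : β → ℝ)
    (hinj : ∀ x ∈ s, ∀ y ∈ s, g x = g y → h (g x) ≠ 0 → x = y) :
    ∑ b ∈ s.image g, h b = ∑ x ∈ s, h (g x) := by
  classical
  rw [← Finset.sum_filter_ne_zero (s.image g) (f := h),
      ← Finset.sum_filter_ne_zero s (f := fun x => h (g x))]
  have himg : (s.filter fun x => h (g x) ≠ 0).image g
      = (s.image g).filter (fun b => h b ≠ 0) := by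
    ext b
    simp only [Finset.mem_image, Finset.mem_filter]
    constructor
    · rintro ⟨x, hx, rfl⟩; exact ⟨⟨x, hx.1, rfl⟩, hx.2⟩
    · rintro ⟨⟨x, hx, rfl⟩, hb⟩; exact ⟨x, ⟨hx, hb⟩, rfl⟩
  rw [← himg, Finset.sum_image]
  intro x hx y hy hxy
  simp only [Finset.coe_filter, Set.mem_setOf_eq] at hx hy
  exact hinj x hx.1 y hy.1 hxy hx.2

variable {X : Type*} [MeasurableSpace X]

/-- Join of two finite partitions. -/
noncomputable def pJoin (P Q : Finset (Set X)) : Finset (Set X) :=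
  letI := Classical.decEq (Set X)
  (P ×ˢ Q).image fun p => p.1 ∩ p.2

/-- Preimage of a finite partition. -/
noncomputable def pPre (f : X → X) (P : Finset (Set X)) : Finset (Set X) :=
  letI := Classical.decEq (Set X)
  P.image (f ⁻¹' ·)

/-- Normalized restriction (conditional measure). -/
noncomputable def condOn (μ : Measure X) (B : Set X) : Measure X :=
  (μ B)⁻¹ • μ.restrict B

/-- Conditional entropy of `R` given a partition `C`. -/
noncomputable def cEnt (μ : Measure X) (R C : Finset (Set X)) : ℝ :=
  ∑ B ∈ C, (μ B).toReal * partEntropy (condOn μ B) R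

lemma mem_pJoin {P Q : Finset (Set X)} {D : Set X} :
    D ∈ pJoin P Q ↔ ∃ A ∈ P, ∃ B ∈ Q, A ∩ B = D := by
  classical
  simp only [pJoin, Finset.mem_image, Finset.mem_product, Prod.exists]
  constructor
  · rintro ⟨a, b, ⟨ha, hb⟩, rfl⟩; exact ⟨a, ha, b, hb, rfl⟩
  · rintro ⟨a, ha, b, hb, rfl⟩; exact ⟨a, b, ⟨ha, hb⟩, rfl⟩

lemma mem_pPre {f : X → X} {P : Finset (Set X)} {D : Set X} :
    D ∈ pPre f P ↔ ∃ A ∈ P, f ⁻¹' A = D := by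
  classical
  simp [pPre, Finset.mem_image]

lemma pJoin_comm (P Q : Finset (Set X)) : pJoin P Q = pJoin Q P := by
  ext D
  simp only [mem_pJoin]
  constructor
  · rintro ⟨A, hA, B, hB, rfl⟩; exact ⟨B, hB, A, hA, Set.inter_comm B A⟩
  · rintro ⟨A, hA, B, hB, rfl⟩; exact ⟨B, hB, A, hA, Set.inter_comm B A⟩

lemma part_eq_of_mem {P : Finset (Set X)} (hP : IsMeasPartition P)
    {A B : Set X} (hA : A ∈ P) (hB : B ∈ P) {x : X} (hxA : x ∈ A) (hxB : x ∈ B) : A = B := by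
  by_contra hne
  have := hP.2.2 A hA B hB hne
  exact absurd this (by
    intro h
    have : x ∈ A ∩ B := ⟨hxA, hxB⟩
    rw [h] at this
    exact this)

lemma part_exists_mem {P : Finset (Set X)} (hP : IsMeasPartition P) (x : X) :
    ∃ A ∈ P, x ∈ A := by
  have : x ∈ ⋃ A ∈ P, A := by rw [hP.2.1]; trivial
  simpa using this

lemma isMeasPartition_pJoin {P Q : Finset (Set X)}
    (hP : IsMeasPartition P) (hQ : IsMeasPartition Q) : IsMeasPartition (pJoin P Q) := by
  refine ⟨?_, ?_, ?_⟩
  · intro D hD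
    obtain ⟨A, hA, B, hB, rfl⟩ := mem_pJoin.1 hD
    exact (hP.1 A hA).inter (hQ.1 B hB)
  · apply Set.eq_univ_of_forall
    intro x
    obtain ⟨A, hA, hxA⟩ := part_exists_mem hP x
    obtain ⟨B, hB, hxB⟩ := part_exists_mem hQ x
    exact Set.mem_biUnion (mem_pJoin.2 ⟨A, hA, B, hB, rfl⟩) ⟨hxA, hxB⟩
  · rintro D hD D' hD' hne
    obtain ⟨A, hA, B, hB, rfl⟩ := mem_pJoin.1 hD
    obtain ⟨A', hA', B', hB', rfl⟩ := mem_pJoin.1 hD'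
    rw [Set.eq_empty_iff_forall_notMem]
    rintro x ⟨⟨hxA, hxB⟩, hxA', hxB'⟩
    exact hne (by rw [part_eq_of_mem hP hA hA' hxA hxA', part_eq_of_mem hQ hB hB' hxB hxB'])

lemma isMeasPartition_pPre {f : X → X} (hf : Measurable f) {P : Finset (Set X)}
    (hP : IsMeasPartition P) : IsMeasPartition (pPre f P) := by
  refine ⟨?_, ?_, ?_⟩
  · intro D hD
    obtain ⟨A, hA, rfl⟩ := mem_pPre.1 hD
    exact hf (hP.1 A hA)
  · apply Set.eq_univ_of_forall
    intro x
    obtain ⟨A, hA, hxA⟩ := part_exists_mem hP (f x)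
    exact Set.mem_biUnion (mem_pPre.2 ⟨A, hA, rfl⟩) hxA
  · rintro D hD D' hD' hne
    obtain ⟨A, hA, rfl⟩ := mem_pPre.1 hD
    obtain ⟨A', hA', rfl⟩ := mem_pPre.1 hD'
    rw [Set.eq_empty_iff_forall_notMem]
    rintro x ⟨hxA, hxA'⟩
    exact hne (by rw [part_eq_of_mem hP hA hA' hxA hxA'])

/-- Finite additivity over a partition. -/
lemma sum_measure_inter (μ : Measure X) [IsFiniteMeasure μ] {P : Finset (Set X)}
    (hP : IsMeasPartition P) {V : Set X} (hV : MeasurableSet V) :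
    ∑ A ∈ P, (μ (A ∩ V)).toReal = (μ V).toReal := by
  classical
  have hdisj : (↑P : Set (Set X)).PairwiseDisjoint fun A => A ∩ V := by
    intro A hA B hB hne
    refine Set.disjoint_left.2 fun x hxA hxB => hne ?_
    exact part_eq_of_mem hP hA hB hxA.1 hxB.1
  have hmeas : ∀ A ∈ P, MeasurableSet (A ∩ V) := fun A hA => (hP.1 A hA).inter hV
  have hU : (⋃ A ∈ P, A ∩ V) = V := by
    rw [← Set.iUnion₂_inter, hP.2.1, Set.univ_inter]
  have := measure_biUnion_finset (μ := μ) hdisj hmeas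
  rw [hU] at this
  rw [this, ENNReal.toReal_sum]
  intro A _
  exact measure_ne_top μ _

lemma sum_measure_eq_one (μ : Measure X) [IsProbabilityMeasure μ] {P : Finset (Set X)}
    (hP : IsMeasPartition P) : ∑ A ∈ P, (μ A).toReal = 1 := by
  have := sum_measure_inter μ hP MeasurableSet.univ
  simpa [Set.inter_univ] using this

lemma partEntropy_nonneg (μ : Measure X) [IsProbabilityMeasure μ] (P : Finset (Set X)) :
    0 ≤ partEntropy μ P := by
  apply Finset.sum_nonneg
  intro A _
  exact Real.negMulLog_nonneg ENNReal.toReal_nonneg (by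
    simpa using ENNReal.toReal_mono (by simp) (prob_le_one (μ := μ) (s := A)))

/-- Weighted Jensen inequality for `negMulLog`. -/
lemma sum_negMulLog_le {ι : Type*} (s : Finset ι) (w x : ι → ℝ) (hw : ∀ i ∈ s, 0 ≤ w i)
    (h1 : ∑ i ∈ s, w i = 1) (hx : ∀ i ∈ s, 0 ≤ x i) :
    ∑ i ∈ s, w i * Real.negMulLog (x i) ≤ Real.negMulLog (∑ i ∈ s, w i * x i) := by
  have := Real.concaveOn_negMulLog.le_map_sum hw h1 (fun i hi => hx i hi)
  simpa [smul_eq_mul] using this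


lemma condOn_apply (μ : Measure X) (B : Set X) {A : Set X} (hA : MeasurableSet A) :
    condOn μ B A = μ (A ∩ B) / μ B := by
  rw [condOn, Measure.smul_apply, Measure.restrict_apply hA, smul_eq_mul, mul_comm,
    ENNReal.div_eq_inv_mul, mul_comm]

lemma condOn_apply_toReal (μ : Measure X) (B : Set X) {A : Set X} (hA : MeasurableSet A) :
    ((condOn μ B) A).toReal = (μ (A ∩ B)).toReal / (μ B).toReal := by
  rw [condOn_apply μ B hA, ENNReal.toReal_div]

lemma isProbabilityMeasure_condOn (μ : Measure X) [IsFiniteMeasure μ] {B : Set X}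
    (h0 : μ B ≠ 0) : IsProbabilityMeasure (condOn μ B) := by
  constructor
  rw [condOn, Measure.smul_apply, Measure.restrict_apply_univ, smul_eq_mul,
    ENNReal.inv_mul_cancel h0 (measure_ne_top μ B)]

lemma toReal_mul_condOn (μ : Measure X) [IsFiniteMeasure μ] (B : Set X) {A : Set X}
    (hA : MeasurableSet A) :
    (μ B).toReal * ((condOn μ B) A).toReal = (μ (A ∩ B)).toReal := by
  rcases eq_or_ne (μ B) 0 with h0 | h0
  · have hz : μ (A ∩ B) = 0 := measure_mono_null Set.inter_subset_right h0
    simp [h0, hz]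
  · have hb0 : (μ B).toReal ≠ 0 := ENNReal.toReal_ne_zero.mpr ⟨h0, measure_ne_top μ B⟩
    rw [condOn_apply_toReal μ B hA, mul_comm, div_mul_cancel₀ _ hb0]

lemma condOn_condOn (μ : Measure X) [IsFiniteMeasure μ] {B E : Set X}
    (hB : MeasurableSet B) (hE : MeasurableSet E) :
    condOn (condOn μ B) E = condOn μ (E ∩ B) := by
  ext s hs
  rw [condOn_apply _ _ hs, condOn_apply _ _ hs, condOn_apply μ B (hs.inter hE),
    condOn_apply μ B hE, Set.inter_assoc]
  rcases eq_or_ne (μ B) 0 with h0 | h0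
  · have h1 : μ (s ∩ (E ∩ B)) = 0 :=
      measure_mono_null (Set.inter_subset_right.trans Set.inter_subset_right) h0
    have h2 : μ (E ∩ B) = 0 := measure_mono_null Set.inter_subset_right h0
    simp [h0, h1, h2]
  · have hBtop := measure_ne_top μ B
    rw [ENNReal.div_eq_inv_mul, ENNReal.div_eq_inv_mul, ENNReal.div_eq_inv_mul,
      ENNReal.div_eq_inv_mul, ENNReal.mul_inv (Or.inl (ENNReal.inv_ne_zero.mpr hBtop)) (Or.inl (ENNReal.inv_ne_top.mpr h0)),
      inv_inv]
    calc μ B * (μ (E ∩ B))⁻¹ * ((μ B)⁻¹ * μ (s ∩ (E ∩ B)))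
        = (μ B * (μ B)⁻¹) * ((μ (E ∩ B))⁻¹ * μ (s ∩ (E ∩ B))) := by ring
      _ = (μ (E ∩ B))⁻¹ * μ (s ∩ (E ∩ B)) := by
          rw [ENNReal.mul_inv_cancel h0 hBtop, one_mul]

lemma cEnt_nonneg (μ : Measure X) [IsFiniteMeasure μ] (R C : Finset (Set X)) :
    0 ≤ cEnt μ R C := by
  apply Finset.sum_nonneg; intro B _
  rcases eq_or_ne (μ B) 0 with h0 | h0
  · simp [h0]
  · haveI := isProbabilityMeasure_condOn μ h0
    exact mul_nonneg ENNReal.toReal_nonneg (partEntropy_nonneg _ R)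

lemma partEntropy_le_log_card (μ : Measure X) [IsProbabilityMeasure μ] {P : Finset (Set X)}
    (hP : IsMeasPartition P) : partEntropy μ P ≤ Real.log P.card := by
  rcases Finset.eq_empty_or_nonempty P with rfl | hne
  · simp [partEntropy]
  have hcard : (0:ℝ) < P.card := by exact_mod_cast Finset.card_pos.mpr hne
  have hj := sum_negMulLog_le P (fun _ => (P.card : ℝ)⁻¹) (fun A => (μ A).toReal)
      (fun _ _ => by positivity)
      (by rw [Finset.sum_const, nsmul_eq_mul, mul_inv_cancel₀ hcard.ne'])
      (fun A _ => ENNReal.toReal_nonneg)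
  have hsum : ∑ A ∈ P, ((P.card : ℝ))⁻¹ * (μ A).toReal = (P.card : ℝ)⁻¹ := by
    rw [← Finset.mul_sum, sum_measure_eq_one μ hP, mul_one]
  rw [hsum, ← Finset.mul_sum] at hj
  have hninv : Real.negMulLog ((P.card:ℝ)⁻¹) = (P.card:ℝ)⁻¹ * Real.log P.card := by
    rw [Real.negMulLog, Real.log_inv]; ring
  rw [hninv] at hj
  have := (mul_le_mul_iff_right₀ (by positivity : (0:ℝ) < (P.card:ℝ)⁻¹)).mp hj
  exact this

lemma chain_rule (μ : Measure X) [IsProbabilityMeasure μ] {R C : Finset (Set X)}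
    (hR : IsMeasPartition R) (hC : IsMeasPartition C) :
    partEntropy μ (pJoin R C) = partEntropy μ C + cEnt μ R C := by
  classical
  have key : partEntropy μ (pJoin R C)
      = ∑ p ∈ R ×ˢ C, Real.negMulLog (μ (p.1 ∩ p.2)).toReal := by
    apply sum_image_eq
    rintro ⟨A, B⟩ hAB ⟨A', B'⟩ hAB' heq hne
    simp only [Finset.mem_product] at hAB hAB'
    have hne0 : μ (A ∩ B) ≠ 0 := by
      intro h
      apply hne
      simp only [h, ENNReal.toReal_zero, Real.negMulLog_zero]
    have hx : (A ∩ B).Nonempty := by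
      rw [Set.nonempty_iff_ne_empty]
      intro h; rw [h] at hne0; simp at hne0
    obtain ⟨x, hxA, hxB⟩ := hx
    have hx' : x ∈ A' ∩ B' := heq ▸ (⟨hxA, hxB⟩ : x ∈ A ∩ B)
    have e1 := part_eq_of_mem hR hAB.1 hAB'.1 hxA hx'.1
    have e2 := part_eq_of_mem hC hAB.2 hAB'.2 hxB hx'.2
    simp [Prod.ext_iff, e1, e2]
  rw [key, Finset.sum_product_right, partEntropy, cEnt, ← Finset.sum_add_distrib]
  apply Finset.sum_congr rfl
  intro B hB
  rcases eq_or_ne (μ B) 0 with h0 | h0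
  · have hz : ∀ A ∈ R, μ (A ∩ B) = 0 := fun A _ => measure_mono_null Set.inter_subset_right h0
    rw [h0]
    simp only [ENNReal.toReal_zero, Real.negMulLog_zero, zero_mul, add_zero]
    apply Finset.sum_eq_zero
    intro A hA; rw [hz A hA]; simp
  · haveI := isProbabilityMeasure_condOn μ h0
    calc ∑ A ∈ R, Real.negMulLog (μ (A ∩ B)).toReal
        = ∑ A ∈ R, (((condOn μ B) A).toReal * Real.negMulLog (μ B).toReal
            + (μ B).toReal * Real.negMulLog ((condOn μ B) A).toReal) := by
          apply Finset.sum_congr rfl; intro A hA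
          rw [← toReal_mul_condOn μ B (hR.1 A hA), Real.negMulLog_mul]
      _ = Real.negMulLog (μ B).toReal + (μ B).toReal * partEntropy (condOn μ B) R := by
          rw [Finset.sum_add_distrib, ← Finset.sum_mul, ← Finset.mul_sum,
              sum_measure_eq_one (condOn μ B) hR, one_mul, partEntropy]

lemma cEnt_le_partEntropy (μ : Measure X) [IsProbabilityMeasure μ] {R C : Finset (Set X)}
    (hR : IsMeasPartition R) (hC : IsMeasPartition C) :
    cEnt μ R C ≤ partEntropy μ R := by
  classical
  have hswap : cEnt μ R C
      = ∑ A ∈ R, ∑ B ∈ C, (μ B).toReal * Real.negMulLog ((condOn μ B) A).toReal := by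
    rw [cEnt, Finset.sum_comm]
    apply Finset.sum_congr rfl
    intro B _
    rw [partEntropy, Finset.mul_sum]
  rw [hswap, partEntropy]
  apply Finset.sum_le_sum
  intro A hA
  have hj := sum_negMulLog_le C (fun B => (μ B).toReal) (fun B => ((condOn μ B) A).toReal)
      (fun _ _ => ENNReal.toReal_nonneg) (sum_measure_eq_one μ hC)
      (fun _ _ => ENNReal.toReal_nonneg)
  have hsum : ∑ B ∈ C, (μ B).toReal * ((condOn μ B) A).toReal = (μ A).toReal := by
    have : ∀ B ∈ C, (μ B).toReal * ((condOn μ B) A).toReal = (μ (B ∩ A)).toReal := by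
      intro B _
      rw [toReal_mul_condOn μ B (hR.1 A hA), Set.inter_comm]
    rw [Finset.sum_congr rfl this, sum_measure_inter μ hC (hR.1 A hA)]
  rw [hsum] at hj
  exact hj

lemma cEnt_mono_cond (μ : Measure X) [IsProbabilityMeasure μ] {R C C' : Finset (Set X)}
    (hR : IsMeasPartition R) (hC : IsMeasPartition C) (hC' : IsMeasPartition C')
    (href : ∀ B' ∈ C', ∃ B ∈ C, (B' ≠ ∅ → B' ⊆ B)) :
    cEnt μ R C' ≤ cEnt μ R C := by
  classical
  have hch : ∀ B' : Set X, ∃ B : Set X, B' ∈ C' → (B ∈ C ∧ (B' ≠ ∅ → B' ⊆ B)) := by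
    intro B'
    by_cases h : B' ∈ C'
    · obtain ⟨B, hB, hsub⟩ := href B' h
      exact ⟨B, fun _ => ⟨hB, hsub⟩⟩
    · exact ⟨∅, fun h' => absurd h' h⟩
  choose r hr using hch
  have hrmem : ∀ B' ∈ C', r B' ∈ C := fun B' h => (hr B' h).1
  have hrsub : ∀ B' ∈ C', B' ≠ ∅ → B' ⊆ r B' := fun B' h => (hr B' h).2
  rw [cEnt, ← Finset.sum_fiberwise_of_maps_to hrmem
    (fun B' => (μ B').toReal * partEntropy (condOn μ B') R)]
  rw [cEnt]
  apply Finset.sum_le_sum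
  intro B hB
  set t := C'.filter (fun B' => r B' = B) with ht
  have lhs_eq : ∑ B' ∈ t, (μ B').toReal * partEntropy (condOn μ B') R
      = ∑ A ∈ R, ∑ B' ∈ t, (μ B').toReal * Real.negMulLog ((condOn μ B') A).toReal := by
    rw [Finset.sum_comm]
    exact Finset.sum_congr rfl fun B' _ => by rw [partEntropy, Finset.mul_sum]
  have rhs_eq : (μ B).toReal * partEntropy (condOn μ B) R
      = ∑ A ∈ R, (μ B).toReal * Real.negMulLog ((condOn μ B) A).toReal := by
    rw [partEntropy, Finset.mul_sum]
  rw [lhs_eq, rhs_eq]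
  apply Finset.sum_le_sum
  intro A hA
  have hfib : ∀ {V : Set X}, MeasurableSet V →
      ∑ B' ∈ t, (μ (V ∩ B')).toReal = (μ (V ∩ B)).toReal := by
    intro V hV
    have base := sum_measure_inter μ hC' (hV.inter (hC.1 B hB))
    rw [← base, ht, Finset.sum_filter]
    apply Finset.sum_congr rfl
    intro B' hB'
    by_cases hf : r B' = B
    · simp only [hf, if_true]
      rcases eq_or_ne B' ∅ with rfl | hBne
      · simp
      · have hsub : B' ⊆ B := hf ▸ hrsub B' hB' hBne
        congr 2
        ext x
        exact ⟨fun ⟨hxV, hxB'⟩ => ⟨hxB', hxV, hsub hxB'⟩,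
          fun ⟨hxB', hxV, _⟩ => ⟨hxV, hxB'⟩⟩
    · simp only [hf, if_false]
      rcases eq_or_ne B' ∅ with rfl | hBne
      · simp
      · have hdis : r B' ∩ B = ∅ := hC.2.2 _ (hrmem B' hB') B hB hf
        have hsub : B' ∩ (V ∩ B) ⊆ (∅ : Set X) := by
          rintro x ⟨hxB', hxV, hxB⟩
          exact hdis ▸ (⟨hrsub B' hB' hBne hxB', hxB⟩ : x ∈ r B' ∩ B)
        have : μ (B' ∩ (V ∩ B)) = 0 := measure_mono_null hsub measure_empty
        simp [this]
  rcases eq_or_ne (μ B) 0 with h0 | h0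
  · have hz : ∀ B' ∈ t, (μ B').toReal * Real.negMulLog ((condOn μ B') A).toReal = 0 := by
      intro B' hB'
      simp only [ht, Finset.mem_filter] at hB'
      rcases eq_or_ne B' ∅ with rfl | hBne
      · simp
      · have : μ B' = 0 := measure_mono_null (hB'.2 ▸ hrsub B' hB'.1 hBne) h0
        simp [this]
    rw [Finset.sum_eq_zero hz, h0]
    simp
  · have hb : (0:ℝ) < (μ B).toReal := ENNReal.toReal_pos h0 (measure_ne_top μ B)
    have hj := sum_negMulLog_le t (fun B' => (μ B').toReal / (μ B).toReal)
        (fun B' => ((condOn μ B') A).toReal)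
        (fun _ _ => by positivity)
        (by
          rw [← Finset.sum_div]
          have h1 := hfib MeasurableSet.univ
          simp only [Set.univ_inter] at h1
          rw [h1, div_self hb.ne'])
        (fun _ _ => ENNReal.toReal_nonneg)
    have hxsum : ∑ B' ∈ t, ((μ B').toReal / (μ B).toReal) * ((condOn μ B') A).toReal
        = ((condOn μ B) A).toReal := by
      have h2 : ∀ B' ∈ t, ((μ B').toReal / (μ B).toReal) * ((condOn μ B') A).toReal
          = (μ (A ∩ B')).toReal / (μ B).toReal := by
        intro B' _
        rw [div_mul_eq_mul_div, toReal_mul_condOn μ B' (hR.1 A hA)]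
      rw [Finset.sum_congr rfl h2, ← Finset.sum_div, hfib (hR.1 A hA),
        condOn_apply_toReal μ B (hR.1 A hA)]
    rw [hxsum] at hj
    have hmul : ∑ B' ∈ t, (μ B').toReal * Real.negMulLog ((condOn μ B') A).toReal
        = (μ B).toReal * ∑ B' ∈ t, ((μ B').toReal / (μ B).toReal)
            * Real.negMulLog ((condOn μ B') A).toReal := by
      rw [Finset.mul_sum]
      apply Finset.sum_congr rfl
      intro B' _
      field_simp
    rw [hmul]
    exact (mul_le_mul_iff_right₀ hb).mpr hj

lemma partEntropy_le_pJoin_left (μ : Measure X) [IsProbabilityMeasure μ]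
    {U V : Finset (Set X)} (hU : IsMeasPartition U) (hV : IsMeasPartition V) :
    partEntropy μ U ≤ partEntropy μ (pJoin U V) := by
  rw [pJoin_comm, chain_rule μ hV hU]
  linarith [cEnt_nonneg μ V U]

lemma partEntropy_pJoin_le (μ : Measure X) [IsProbabilityMeasure μ]
    {U V : Finset (Set X)} (hU : IsMeasPartition U) (hV : IsMeasPartition V) :
    partEntropy μ (pJoin U V) ≤ partEntropy μ U + partEntropy μ V := by
  rw [chain_rule μ hU hV]
  linarith [cEnt_le_partEntropy μ hU hV]

lemma cEnt_pJoin_le (μ : Measure X) [IsProbabilityMeasure μ]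
    {U V C : Finset (Set X)} (hU : IsMeasPartition U) (hV : IsMeasPartition V) :
    cEnt μ (pJoin U V) C ≤ cEnt μ U C + cEnt μ V C := by
  rw [cEnt, cEnt, cEnt, ← Finset.sum_add_distrib]
  apply Finset.sum_le_sum
  intro B _
  rcases eq_or_ne (μ B) 0 with h0 | h0
  · simp [h0]
  · haveI := isProbabilityMeasure_condOn μ h0
    rw [← mul_add]
    exact mul_le_mul_of_nonneg_left (partEntropy_pJoin_le (condOn μ B) hU hV)
      ENNReal.toReal_nonneg

lemma cEnt_mono_left (μ : Measure X) [IsProbabilityMeasure μ]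
    {U V C : Finset (Set X)} (hU : IsMeasPartition U) (hV : IsMeasPartition V) :
    cEnt μ U C ≤ cEnt μ (pJoin U V) C := by
  rw [cEnt, cEnt]
  apply Finset.sum_le_sum
  intro B _
  rcases eq_or_ne (μ B) 0 with h0 | h0
  · simp [h0]
  · haveI := isProbabilityMeasure_condOn μ h0
    exact mul_le_mul_of_nonneg_left (partEntropy_le_pJoin_left (condOn μ B) hU hV)
      ENNReal.toReal_nonneg

lemma cEnt_pJoin_chain (μ : Measure X) [IsProbabilityMeasure μ]
    {R V C : Finset (Set X)} (hR : IsMeasPartition R) (hV : IsMeasPartition V)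
    (hC : IsMeasPartition C) :
    cEnt μ (pJoin R V) C = cEnt μ V C + cEnt μ R (pJoin V C) := by
  classical
  have h1 : cEnt μ (pJoin R V) C = cEnt μ V C + ∑ B ∈ C, (μ B).toReal *
      cEnt (condOn μ B) R V := by
    rw [cEnt, cEnt, ← Finset.sum_add_distrib]
    apply Finset.sum_congr rfl
    intro B _
    rcases eq_or_ne (μ B) 0 with h0 | h0
    · simp [h0]
    · haveI := isProbabilityMeasure_condOn μ h0
      rw [← mul_add, chain_rule (condOn μ B) hR hV]
  rw [h1]
  congr 1
  have h2 : cEnt μ R (pJoin V C) = ∑ p ∈ V ×ˢ C,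
      (μ (p.1 ∩ p.2)).toReal * partEntropy (condOn μ (p.1 ∩ p.2)) R := by
    apply sum_image_eq
    rintro ⟨E, B⟩ hp ⟨E', B'⟩ hp' heq hne
    simp only [Finset.mem_product] at hp hp'
    have hne0 : μ (E ∩ B) ≠ 0 := by
      intro h; apply hne; simp [h]
    have hx : (E ∩ B).Nonempty := by
      rw [Set.nonempty_iff_ne_empty]
      intro h; rw [h] at hne0; simp at hne0
    obtain ⟨x, hxE, hxB⟩ := hx
    have hx' : x ∈ E' ∩ B' := heq ▸ (⟨hxE, hxB⟩ : x ∈ E ∩ B)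
    have e1 := part_eq_of_mem hV hp.1 hp'.1 hxE hx'.1
    have e2 := part_eq_of_mem hC hp.2 hp'.2 hxB hx'.2
    simp [Prod.ext_iff, e1, e2]
  rw [h2, Finset.sum_product_right]
  symm
  apply Finset.sum_congr rfl
  intro B hB
  rcases eq_or_ne (μ B) 0 with h0 | h0
  · rw [h0]
    simp only [ENNReal.toReal_zero, zero_mul]
    apply Finset.sum_eq_zero
    intro E _
    have : μ (E ∩ B) = 0 := measure_mono_null Set.inter_subset_right h0
    simp [this]
  · rw [cEnt, Finset.mul_sum]
    apply Finset.sum_congr rfl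
    intro E hE
    rw [condOn_condOn μ (hC.1 B hB) (hV.1 E hE), ← mul_assoc,
      toReal_mul_condOn μ B (hV.1 E hE)]

lemma partEntropy_congr_nonempty (μ : Measure X) {P Q : Finset (Set X)}
    (h : ∀ s : Set X, s ≠ ∅ → (s ∈ P ↔ s ∈ Q)) : partEntropy μ P = partEntropy μ Q := by
  classical
  have hP : partEntropy μ P = ∑ A ∈ P.erase ∅, Real.negMulLog (μ A).toReal :=
    (Finset.sum_erase _ (by simp)).symm
  have hQ : partEntropy μ Q = ∑ A ∈ Q.erase ∅, Real.negMulLog (μ A).toReal :=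
    (Finset.sum_erase _ (by simp)).symm
  rw [hP, hQ]
  congr 1
  ext s
  simp only [Finset.mem_erase]
  exact ⟨fun ⟨h1, h2⟩ => ⟨h1, (h s h1).1 h2⟩, fun ⟨h1, h2⟩ => ⟨h1, (h s h1).2 h2⟩⟩

lemma partEntropy_mono_refine (μ : Measure X) [IsProbabilityMeasure μ]
    {P C : Finset (Set X)} (hP : IsMeasPartition P) (hC : IsMeasPartition C)
    (href : ∀ A ∈ P, A ≠ ∅ → ∃ B ∈ C, A ⊆ B) :
    partEntropy μ C ≤ partEntropy μ P := by
  have h1 := chain_rule μ hP hC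
  have h2 : partEntropy μ (pJoin P C) = partEntropy μ P := by
    apply partEntropy_congr_nonempty
    intro s hs
    constructor
    · intro hmem
      obtain ⟨A, hA, B, hB, rfl⟩ := mem_pJoin.1 hmem
      have hAne : A ≠ ∅ := by
        rintro rfl; simp at hs
      obtain ⟨B₀, hB₀, hsub⟩ := href A hA hAne
      obtain ⟨x, hx1, hx2⟩ : (A ∩ B).Nonempty := Set.nonempty_iff_ne_empty.2 hs
      have hBB : B₀ = B := part_eq_of_mem hC hB₀ hB (hsub hx1) hx2
      have hAB : A ∩ B = A := Set.inter_eq_self_of_subset_left (hBB ▸ hsub)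
      rw [hAB]; exact hA
    · intro hmem
      obtain ⟨B₀, hB₀, hsub⟩ := href s hmem hs
      exact mem_pJoin.2 ⟨s, hmem, B₀, hB₀, Set.inter_eq_self_of_subset_left hsub⟩
  linarith [cEnt_nonneg μ P C]

lemma measure_preimage_eq (μ : Measure X) {f : X → X} (hf : Measurable f)
    (hμ : Measure.map f μ = μ) {A : Set X} (hA : MeasurableSet A) : μ (f ⁻¹' A) = μ A := by
  conv_rhs => rw [← hμ]
  rw [Measure.map_apply hf hA]

lemma partEntropy_pPre (μ : Measure X) {f : X → X} (hf : Measurable f)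
    (hsurj : Function.Surjective f) (hμ : Measure.map f μ = μ) {P : Finset (Set X)}
    (hP : ∀ A ∈ P, MeasurableSet A) :
    partEntropy μ (pPre f P) = partEntropy μ P := by
  classical
  erw [partEntropy, pPre, Finset.sum_image (g := (f ⁻¹' ·))
    (fun A _ B _ h => Set.preimage_injective.mpr hsurj h)]
  apply Finset.sum_congr rfl
  intro A hA
  rw [measure_preimage_eq μ hf hμ (hP A hA)]

lemma cEnt_pPre (μ : Measure X) [IsFiniteMeasure μ] {f : X → X} (hf : Measurable f)
    (hsurj : Function.Surjective f) (hμ : Measure.map f μ = μ) {R C : Finset (Set X)}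
    (hR : ∀ A ∈ R, MeasurableSet A) (hC : ∀ B ∈ C, MeasurableSet B) :
    cEnt μ (pPre f R) (pPre f C) = cEnt μ R C := by
  classical
  erw [cEnt, cEnt, pPre, Finset.sum_image (g := (f ⁻¹' ·))
    (fun A _ B _ h => Set.preimage_injective.mpr hsurj h)]
  apply Finset.sum_congr rfl
  intro B hB
  rw [measure_preimage_eq μ hf hμ (hC B hB)]
  congr 1
  erw [partEntropy, partEntropy, pPre, Finset.sum_image (g := (f ⁻¹' ·))
    (fun A _ B _ h => Set.preimage_injective.mpr hsurj h)]
  apply Finset.sum_congr rfl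
  intro A hA
  rw [condOn_apply_toReal μ _ (hf (hR A hA)), condOn_apply_toReal μ _ (hR A hA),
    ← Set.preimage_inter, measure_preimage_eq μ hf hμ ((hR A hA).inter (hC B hB)),
    measure_preimage_eq μ hf hμ (hC B hB)]

lemma mem_dynJoin {T : X → X} {P : Finset (Set X)} {n : ℕ} {D : Set X} :
    D ∈ dynJoin T P n ↔
      ∃ f : Fin n → Set X, (∀ i, f i ∈ P) ∧ (⋂ i : Fin n, T^[(i : ℕ)] ⁻¹' f i) = D := by
  classical
  simp only [dynJoin, Finset.mem_image, Fintype.mem_piFinset]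

lemma isMeasPartition_dynJoin {T : X → X} (hT : Measurable T) {P : Finset (Set X)}
    (hP : IsMeasPartition P) (n : ℕ) : IsMeasPartition (dynJoin T P n) := by
  refine ⟨?_, ?_, ?_⟩
  · intro D hD
    obtain ⟨f, hf, rfl⟩ := mem_dynJoin.1 hD
    exact MeasurableSet.iInter fun i => (hT.iterate _) (hP.1 _ (hf i))
  · apply Set.eq_univ_of_forall
    intro x
    have h : ∀ i : Fin n, ∃ A, A ∈ P ∧ T^[(i : ℕ)] x ∈ A := fun i => by
      obtain ⟨A, hA, hxA⟩ := part_exists_mem hP (T^[(i : ℕ)] x); exact ⟨A, hA, hxA⟩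
    choose f hf hxf using h
    exact Set.mem_biUnion (mem_dynJoin.2 ⟨f, hf, rfl⟩) (Set.mem_iInter.2 fun i => hxf i)
  · intro D hD D' hD' hne
    obtain ⟨f, hf, rfl⟩ := mem_dynJoin.1 hD
    obtain ⟨g, hg, rfl⟩ := mem_dynJoin.1 hD'
    rw [Set.eq_empty_iff_forall_notMem]
    rintro x ⟨hx1, hx2⟩
    apply hne
    have h : ∀ i : Fin n, f i = g i := fun i =>
      part_eq_of_mem hP (hf i) (hg i) (Set.mem_iInter.1 hx1 i) (Set.mem_iInter.1 hx2 i)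
    exact Set.iInter_congr fun i => by rw [h i]

lemma dynJoin_one (T : X → X) (P : Finset (Set X)) : dynJoin T P 1 = P := by
  classical
  ext D
  rw [mem_dynJoin]
  constructor
  · rintro ⟨f, hf, rfl⟩
    have h : (⋂ i : Fin 1, T^[(i : ℕ)] ⁻¹' f i) = f 0 := by
      apply Set.eq_of_subset_of_subset
      · exact Set.iInter_subset_of_subset 0 (by simp)
      · intro x hx
        refine Set.mem_iInter.2 fun i => ?_
        have : i = 0 := Subsingleton.elim i 0
        rw [this]; simpa using hx
    rw [h]; exact hf 0
  · intro hD
    refine ⟨fun _ => D, fun _ => hD, ?_⟩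
    apply Set.eq_of_subset_of_subset
    · exact Set.iInter_subset_of_subset 0 (by simp)
    · intro x hx
      refine Set.mem_iInter.2 fun i => ?_
      have : i = 0 := Subsingleton.elim i 0
      rw [this]; simpa using hx

lemma iInter_fin_succ' {α : Type*} {n : ℕ} (g : Fin (n + 1) → Set α) :
    (⋂ i, g i) = (⋂ i : Fin n, g i.castSucc) ∩ g (Fin.last n) := by
  ext x
  simp only [Set.mem_iInter, Set.mem_inter_iff]
  constructor
  · intro h; exact ⟨fun i => h _, h _⟩
  · rintro ⟨h1, h2⟩ i
    rcases Fin.eq_castSucc_or_eq_last i with ⟨j, rfl⟩ | rfl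
    · exact h1 j
    · exact h2

lemma dynJoin_succ (T : X → X) (P : Finset (Set X)) (n : ℕ) :
    dynJoin T P (n + 1) = pJoin (dynJoin T P n) (pPre (T^[n]) P) := by
  classical
  ext D
  rw [mem_dynJoin, mem_pJoin]
  constructor
  · rintro ⟨f, hf, rfl⟩
    refine ⟨⋂ i : Fin n, T^[(i : ℕ)] ⁻¹' f i.castSucc,
      mem_dynJoin.2 ⟨fun i => f i.castSucc, fun i => hf _, rfl⟩,
      T^[n] ⁻¹' f (Fin.last n), mem_pPre.2 ⟨f (Fin.last n), hf _, rfl⟩, ?_⟩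
    rw [iInter_fin_succ' (fun i => T^[(i : ℕ)] ⁻¹' f i)]
    simp [Fin.coe_castSucc, Fin.val_last]
  · rintro ⟨A, hA, B, hB, rfl⟩
    obtain ⟨g, hg, rfl⟩ := mem_dynJoin.1 hA
    obtain ⟨p, hp, rfl⟩ := mem_pPre.1 hB
    refine ⟨Fin.snoc g p, ?_, ?_⟩
    · intro i
      rcases Fin.eq_castSucc_or_eq_last i with ⟨j, rfl⟩ | rfl
      · rw [Fin.snoc_castSucc]; exact hg j
      · rw [Fin.snoc_last]; exact hp
    · rw [iInter_fin_succ' (fun i => T^[(i : ℕ)] ⁻¹' (Fin.snoc g p : Fin (n+1) → Set X) i)]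
      simp [Fin.snoc_castSucc, Fin.snoc_last, Fin.coe_castSucc, Fin.val_last]

lemma dynJoin_iterate (T : X → X) (P : Finset (Set X)) {K : ℕ} (hK : 0 < K) (n : ℕ) :
    dynJoin (T^[K]) (dynJoin T P K) n = dynJoin T P (n * K) := by
  classical
  ext D
  rw [mem_dynJoin, mem_dynJoin]
  constructor
  · rintro ⟨f, hf, rfl⟩
    choose g hg1 hg2 using fun j => mem_dynJoin.1 (hf j)
    have hdiv : ∀ l : Fin (n * K), (l : ℕ) / K < n := fun l =>
      (Nat.div_lt_iff_lt_mul hK).2 l.2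
    refine ⟨fun l => g ⟨(l : ℕ) / K, hdiv l⟩ ⟨(l : ℕ) % K, Nat.mod_lt _ hK⟩,
      fun l => hg1 _ _, ?_⟩
    ext x
    simp only [Set.mem_iInter, Set.mem_preimage]
    constructor
    · intro hx j
      rw [← hg2 j]
      refine Set.mem_iInter.2 fun i => ?_
      simp only [Set.mem_preimage]
      have hlt : (i : ℕ) + K * (j : ℕ) < n * K := by
        calc (i : ℕ) + K * (j : ℕ) < K + K * (j : ℕ) := by omega
          _ = K * ((j : ℕ) + 1) := by ring
          _ ≤ K * n := Nat.mul_le_mul_left K j.2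
          _ = n * K := Nat.mul_comm _ _
      have h1 := hx ⟨(i : ℕ) + K * (j : ℕ), hlt⟩
      have e1 : (⟨((i : ℕ) + K * (j : ℕ)) / K, hdiv ⟨(i : ℕ) + K * (j : ℕ), hlt⟩⟩ : Fin n) = j := by
        apply Fin.ext
        show ((i : ℕ) + K * (j : ℕ)) / K = (j : ℕ)
        rw [Nat.add_mul_div_left _ _ hK, Nat.div_eq_of_lt i.2, Nat.zero_add]
      have e2 : (⟨((i : ℕ) + K * (j : ℕ)) % K, Nat.mod_lt _ hK⟩ : Fin K) = i := by
        apply Fin.ext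
        show ((i : ℕ) + K * (j : ℕ)) % K = (i : ℕ)
        rw [Nat.add_mul_mod_self_left, Nat.mod_eq_of_lt i.2]
      rw [e1, e2] at h1
      rw [← Function.iterate_mul, ← Function.iterate_add_apply]
      exact h1
    · intro hx l
      have h1 := hx ⟨(l : ℕ) / K, hdiv l⟩
      rw [← hg2 ⟨(l : ℕ) / K, hdiv l⟩] at h1
      have h2 := Set.mem_iInter.1 h1 ⟨(l : ℕ) % K, Nat.mod_lt _ hK⟩
      simp only [Set.mem_preimage] at h2
      rw [← Function.iterate_mul, ← Function.iterate_add_apply, Nat.mod_add_div] at h2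
      exact h2
  · rintro ⟨h, hh, rfl⟩
    have hlt : ∀ (j : Fin n) (i : Fin K), (i : ℕ) + K * (j : ℕ) < n * K := by
      intro j i
      calc (i : ℕ) + K * (j : ℕ) < K + K * (j : ℕ) := by omega
        _ = K * ((j : ℕ) + 1) := by ring
        _ ≤ K * n := Nat.mul_le_mul_left K j.2
        _ = n * K := Nat.mul_comm _ _
    refine ⟨fun j => ⋂ i : Fin K, T^[(i : ℕ)] ⁻¹' h ⟨(i : ℕ) + K * (j : ℕ), hlt j i⟩,
      fun j => mem_dynJoin.2 ⟨fun i => h ⟨(i : ℕ) + K * (j : ℕ), hlt j i⟩, fun i => hh _, rfl⟩,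
      ?_⟩
    ext x
    simp only [Set.mem_iInter, Set.mem_preimage]
    constructor
    · intro hx l
      have h1 := hx ⟨(l : ℕ) / K, (Nat.div_lt_iff_lt_mul hK).2 l.2⟩
        ⟨(l : ℕ) % K, Nat.mod_lt _ hK⟩
      simp only [Set.mem_preimage] at h1 ⊢
      rw [← Function.iterate_mul, ← Function.iterate_add_apply] at h1
      have e : ((l : ℕ) % K + K * ((l : ℕ) / K)) = (l : ℕ) := Nat.mod_add_div _ _
      have efin : (⟨(l : ℕ) % K + K * ((l : ℕ) / K), by rw [e]; exact l.2⟩ : Fin (n * K)) = l :=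
        Fin.ext e
      rw [show (⟨(l:ℕ) % K + K * ((l:ℕ)/K), _⟩ : Fin (n*K)) = l from efin] at h1
      rw [← e]
      exact h1
    · intro hx j i
      rw [← Function.iterate_mul, ← Function.iterate_add_apply]
      exact hx _

lemma pPre_dynJoin {T S : X → X} (hcomm : ∀ i : ℕ, ∀ x, T^[i] (S x) = S (T^[i] x))
    (Q : Finset (Set X)) (n : ℕ) :
    pPre S (dynJoin T Q n) = dynJoin T (pPre S Q) n := by
  classical
  have key : ∀ (i : ℕ) (A : Set X), T^[i] ⁻¹' (S ⁻¹' A) = S ⁻¹' (T^[i] ⁻¹' A) := by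
    intro i A
    ext x
    simp only [Set.mem_preimage]
    rw [hcomm i x]
  ext D
  rw [mem_pPre, mem_dynJoin]
  constructor
  · rintro ⟨A, hA, rfl⟩
    obtain ⟨f, hf, rfl⟩ := mem_dynJoin.1 hA
    refine ⟨fun i => S ⁻¹' f i, fun i => mem_pPre.2 ⟨f i, hf i, rfl⟩, ?_⟩
    rw [Set.preimage_iInter]
    exact Set.iInter_congr fun i => key _ _
  · rintro ⟨g, hg, rfl⟩
    choose f hf1 hf2 using fun i => mem_pPre.1 (hg i)
    refine ⟨⋂ i : Fin n, T^[(i : ℕ)] ⁻¹' f i, mem_dynJoin.2 ⟨f, hf1, rfl⟩, ?_⟩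
    rw [Set.preimage_iInter]
    exact Set.iInter_congr fun i => by rw [← hf2 i, key]

lemma dynJoin_iterate_refines {T : X → X} {C : Finset (Set X)} {K m n : ℕ}
    (h : ∀ j : Fin m, K * (j : ℕ) < n) :
    ∀ A ∈ dynJoin T C n, A ≠ ∅ → ∃ B ∈ dynJoin (T^[K]) C m, A ⊆ B := by
  intro A hA _
  obtain ⟨g, hg, rfl⟩ := mem_dynJoin.1 hA
  refine ⟨⋂ j : Fin m, (T^[K])^[(j : ℕ)] ⁻¹' g ⟨K * (j : ℕ), h j⟩,
    mem_dynJoin.2 ⟨fun j => g ⟨K * (j : ℕ), h j⟩, fun j => hg _, rfl⟩, ?_⟩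
  intro x hx
  refine Set.mem_iInter.2 fun j => ?_
  have h1 := Set.mem_iInter.1 hx ⟨K * (j : ℕ), h j⟩
  simpa [← Function.iterate_mul] using h1

lemma dynJoin_add (T : X → X) (P : Finset (Set X)) (r s : ℕ) :
    dynJoin T P (r + s) = pJoin (dynJoin T P r) (pPre (T^[r]) (dynJoin T P s)) := by
  classical
  ext D
  rw [mem_dynJoin, mem_pJoin]
  constructor
  · rintro ⟨h, hh, rfl⟩
    refine ⟨⋂ i : Fin r, T^[(i : ℕ)] ⁻¹' h ⟨(i : ℕ), by omega⟩,
      mem_dynJoin.2 ⟨fun i => h ⟨(i : ℕ), by omega⟩, fun i => hh _, rfl⟩,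
      T^[r] ⁻¹' (⋂ i : Fin s, T^[(i : ℕ)] ⁻¹' h ⟨r + (i : ℕ), by omega⟩),
      mem_pPre.2 ⟨_, mem_dynJoin.2 ⟨fun i => h ⟨r + (i : ℕ), by omega⟩, fun i => hh _, rfl⟩, rfl⟩,
      ?_⟩
    ext x
    simp only [Set.mem_inter_iff, Set.mem_iInter, Set.mem_preimage]
    constructor
    · rintro ⟨h1, h2⟩ l
      by_cases hl : (l : ℕ) < r
      · have := h1 ⟨(l : ℕ), hl⟩
        have e : (⟨(l : ℕ), by omega⟩ : Fin (r + s)) = l := Fin.ext rfl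
        rwa [e] at this
      · have hls : (l : ℕ) - r < s := by omega
        have := h2 ⟨(l : ℕ) - r, hls⟩
        rw [← Function.iterate_add_apply] at this
        have e : (⟨r + ((l : ℕ) - r), by omega⟩ : Fin (r + s)) = l := by
          apply Fin.ext
          show r + ((l : ℕ) - r) = (l : ℕ)
          omega
        rw [e] at this
        have e2 : (l : ℕ) - r + r = (l : ℕ) := by omega
        rwa [e2] at this
    · intro hx
      constructor
      · intro i
        exact hx ⟨(i : ℕ), by omega⟩
      · intro i
        rw [← Function.iterate_add_apply]
        have := hx ⟨r + (i : ℕ), by omega⟩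
        have e2 : (i : ℕ) + r = r + (i : ℕ) := by omega
        rwa [e2]
  · rintro ⟨A, hA, B, hB, rfl⟩
    obtain ⟨f, hf, rfl⟩ := mem_dynJoin.1 hA
    obtain ⟨Bq, hBq, rfl⟩ := mem_pPre.1 hB
    obtain ⟨g, hg, rfl⟩ := mem_dynJoin.1 hBq
    refine ⟨fun l => if hl : (l : ℕ) < r then f ⟨(l : ℕ), hl⟩ else g ⟨(l : ℕ) - r, by omega⟩,
      ?_, ?_⟩
    · intro l
      by_cases hl : (l : ℕ) < r
      · simp only [hl, dif_pos]; exact hf _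
      · simp only [hl, dif_neg, not_false_iff]; exact hg _
    · ext x
      simp only [Set.mem_inter_iff, Set.mem_iInter, Set.mem_preimage]
      constructor
      · intro hx
        constructor
        · intro i
          have := hx ⟨(i : ℕ), by omega⟩
          simp only [i.2, dif_pos] at this
          exact this
        · intro i
          have := hx ⟨r + (i : ℕ), by omega⟩
          have hge : ¬ (r + (i : ℕ) < r) := by omega
          simp only [hge, dif_neg, not_false_iff] at this
          rw [← Function.iterate_add_apply]
          have e2 : (i : ℕ) + r = r + (i : ℕ) := by omega
          rw [e2]
          have e3 : r + (i : ℕ) - r = (i : ℕ) := by omega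
          simpa [e3] using this
      · rintro ⟨h1, h2⟩ l
        by_cases hl : (l : ℕ) < r
        · simp only [hl, dif_pos]
          exact h1 ⟨(l : ℕ), hl⟩
        · simp only [hl, dif_neg, not_false_iff]
          have := h2 ⟨(l : ℕ) - r, by omega⟩
          rw [← Function.iterate_add_apply] at this
          have e2 : (l : ℕ) - r + r = (l : ℕ) := by omega
          rwa [e2] at this

lemma exists_atoms {ι : Type*} [DecidableEq ι] (idx : Finset ι) (G : ι → Set X)
    (hG : ∀ p ∈ idx, MeasurableSet (G p)) :
    ∃ Q : Finset (Set X), IsMeasPartition Q ∧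
      ∀ B ∈ Q, ∀ p ∈ idx, B ⊆ G p ∨ B ⊆ (G p)ᶜ := by
  classical
  refine ⟨idx.powerset.image (fun s => (⋂ p ∈ s, G p) ∩ ⋂ p ∈ idx \ s, (G p)ᶜ), ?_, ?_⟩
  · refine ⟨?_, ?_, ?_⟩
    · intro B hB
      obtain ⟨s, hs, rfl⟩ := Finset.mem_image.1 hB
      rw [Finset.mem_powerset] at hs
      refine MeasurableSet.inter ?_ ?_
      · exact MeasurableSet.biInter s.countable_toSet fun p hp => hG p (hs hp)
      · exact MeasurableSet.biInter (idx \ s).countable_toSet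
          fun p hp => (hG p (Finset.mem_sdiff.1 hp).1).compl
    · apply Set.eq_univ_of_forall
      intro y
      set sy := idx.filter (fun p => y ∈ G p) with hsy
      have hmem : (⋂ p ∈ sy, G p) ∩ (⋂ p ∈ idx \ sy, (G p)ᶜ) ∈
          idx.powerset.image (fun s => (⋂ p ∈ s, G p) ∩ ⋂ p ∈ idx \ s, (G p)ᶜ) :=
        Finset.mem_image.2 ⟨sy, Finset.mem_powerset.2 (Finset.filter_subset _ _), rfl⟩
      refine Set.mem_biUnion hmem ⟨?_, ?_⟩
      · exact Set.mem_biInter fun p hp => (Finset.mem_filter.1 hp).2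
      · refine Set.mem_biInter fun p hp => ?_
        obtain ⟨hpidx, hpns⟩ := Finset.mem_sdiff.1 hp
        intro hyG
        exact hpns (Finset.mem_filter.2 ⟨hpidx, hyG⟩)
    · intro B hB B' hB' hne
      obtain ⟨s, hs, rfl⟩ := Finset.mem_image.1 hB
      obtain ⟨t, ht, rfl⟩ := Finset.mem_image.1 hB'
      rw [Finset.mem_powerset] at hs ht
      rw [Set.eq_empty_iff_forall_notMem]
      rintro x ⟨⟨hx1, hx2⟩, hx3, hx4⟩
      apply hne
      have hst : s = t := by
        apply Finset.ext
        intro p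
        constructor
        · intro hps
          by_contra hpt
          exact (Set.mem_iInter₂.1 hx4 p (Finset.mem_sdiff.2 ⟨hs hps, hpt⟩))
            (Set.mem_iInter₂.1 hx1 p hps)
        · intro hpt
          by_contra hps
          exact (Set.mem_iInter₂.1 hx2 p (Finset.mem_sdiff.2 ⟨ht hpt, hps⟩))
            (Set.mem_iInter₂.1 hx3 p hpt)
      rw [hst]
  · intro B hB p hp
    obtain ⟨s, hs, rfl⟩ := Finset.mem_image.1 hB
    rw [Finset.mem_powerset] at hs
    by_cases hps : p ∈ s
    · exact Or.inl ((Set.inter_subset_left).trans (Set.biInter_subset_of_mem hps))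
    · exact Or.inr ((Set.inter_subset_right).trans
        (Set.biInter_subset_of_mem (Finset.mem_sdiff.2 ⟨hp, hps⟩)))

lemma cEnt_le_of_locally_const (μ : Measure X) [IsProbabilityMeasure μ]
    {R V : Finset (Set X)} (hR : IsMeasPartition R) (hV : IsMeasPartition V)
    (hRne : R.Nonempty) {F : Set X} (hF : MeasurableSet F)
    (h : ∀ D ∈ V, (∀ A ∈ R, A ∩ D = D ∨ A ∩ D = ∅) ∨ D ⊆ F) :
    cEnt μ R V ≤ (μ F).toReal * Real.log R.card := by
  classical
  have hlog : (0:ℝ) ≤ Real.log R.card := Real.log_nonneg (by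
    have := Finset.card_pos.2 hRne
    exact_mod_cast this)
  rw [cEnt]
  have step1 : ∑ D ∈ V, (μ D).toReal * partEntropy (condOn μ D) R
      ≤ ∑ D ∈ V, (if (∀ A ∈ R, A ∩ D = D ∨ A ∩ D = ∅) then 0
          else (μ D).toReal * Real.log R.card) := by
    apply Finset.sum_le_sum
    intro D hD
    by_cases hgood : ∀ A ∈ R, A ∩ D = D ∨ A ∩ D = ∅
    · rw [if_pos hgood]
      rcases eq_or_ne (μ D) 0 with h0 | h0
      · simp [h0]
      · have hd0 : (μ D).toReal ≠ 0 := ENNReal.toReal_ne_zero.mpr ⟨h0, measure_ne_top μ D⟩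
        have hzero : partEntropy (condOn μ D) R = 0 := by
          rw [partEntropy]
          apply Finset.sum_eq_zero
          intro A hA
          rcases hgood A hA with hAD | hAD
          · rw [condOn_apply_toReal μ D (hR.1 A hA), hAD, div_self hd0]
            exact Real.negMulLog_one
          · rw [condOn_apply_toReal μ D (hR.1 A hA), hAD]
            simp
        rw [hzero, mul_zero]
    · rw [if_neg hgood]
      rcases eq_or_ne (μ D) 0 with h0 | h0
      · simp [h0]
      · haveI := isProbabilityMeasure_condOn μ h0
        exact mul_le_mul_of_nonneg_left (partEntropy_le_log_card _ hR) ENNReal.toReal_nonneg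
  refine step1.trans ?_
  rw [Finset.sum_ite, Finset.sum_const_zero, zero_add, ← Finset.sum_mul]
  apply mul_le_mul_of_nonneg_right ?_ hlog
  set bad := V.filter (fun D => ¬(∀ A ∈ R, A ∩ D = D ∨ A ∩ D = ∅)) with hbad
  have hsubF : ∀ D ∈ bad, D ⊆ F := by
    intro D hD
    obtain ⟨hDV, hDbad⟩ := Finset.mem_filter.1 hD
    rcases h D hDV with hg | hf
    · exact absurd hg hDbad
    · exact hf
  have hdisj : (↑bad : Set (Set X)).PairwiseDisjoint id := by
    intro D hD D' hD' hne
    rw [Finset.mem_coe, hbad, Finset.mem_filter] at hD hD'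
    refine Set.disjoint_left.2 fun x hxD hxD' => hne ?_
    exact part_eq_of_mem hV hD.1 hD'.1 hxD hxD'
  have hmeas : ∀ D ∈ bad, MeasurableSet D := fun D hD =>
    hV.1 D (Finset.mem_filter.1 hD).1
  have hsum : (μ (⋃ D ∈ bad, D)) = ∑ D ∈ bad, μ D := by
    have h1 := measure_biUnion_finset (μ := μ) hdisj hmeas
    simpa using h1
  rw [← ENNReal.toReal_sum (fun D _ => measure_ne_top μ D), ← hsum]
  apply ENNReal.toReal_mono (measure_ne_top μ F)
  apply measure_mono
  exact Set.iUnion₂_subset hsubF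

lemma map_iterate_eq (μ : Measure X) {f : X → X} (hf : Measurable f)
    (hμ : Measure.map f μ = μ) (m : ℕ) : Measure.map f^[m] μ = μ := by
  induction m with
  | zero => simp [Measure.map_id]
  | succ m ih =>
    rw [Function.iterate_succ, ← Measure.map_map (hf.iterate m) hf, hμ, ih]

lemma dynJoin_refines_prev {f : X → X} {C : Finset (Set X)} {m : ℕ} :
    ∀ D ∈ dynJoin f C (m + 1), ∃ B ∈ dynJoin f C m, (D ≠ ∅ → D ⊆ B) := by
  intro D hD
  rw [dynJoin_succ] at hD
  obtain ⟨A, hA, B, hB, rfl⟩ := mem_pJoin.1 hD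
  exact ⟨A, hA, fun _ => Set.inter_subset_left⟩

lemma dynJoin_refines_pPre {f : X → X} {C : Finset (Set X)} {m : ℕ} :
    ∀ D ∈ dynJoin f C (m + 1), ∃ B ∈ pPre (f^[m]) C, (D ≠ ∅ → D ⊆ B) := by
  intro D hD
  rw [dynJoin_succ] at hD
  obtain ⟨A, hA, B, hB, rfl⟩ := mem_pJoin.1 hD
  exact ⟨B, hB, fun _ => Set.inter_subset_right⟩

lemma cEnt_dynJoin_le (μ : Measure X) [IsProbabilityMeasure μ] {f : X → X}
    (hf : Measurable f) (hsurj : Function.Surjective f) (hμ : Measure.map f μ = μ)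
    {R C : Finset (Set X)} (hR : IsMeasPartition R) (hC : IsMeasPartition C) (m : ℕ) :
    cEnt μ (dynJoin f R (m + 1)) (dynJoin f C (m + 1)) ≤ (m + 1) * cEnt μ R C := by
  induction m with
  | zero =>
    rw [dynJoin_one, dynJoin_one]
    simp
  | succ m ih =>
    have hRm := isMeasPartition_dynJoin hf hR (m + 1)
    have hCm := isMeasPartition_dynJoin hf hC (m + 1)
    have hCm2 := isMeasPartition_dynJoin hf hC (m + 2)
    have hRpre : IsMeasPartition (pPre (f^[m + 1]) R) := isMeasPartition_pPre (hf.iterate _) hR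
    have hCpre : IsMeasPartition (pPre (f^[m + 1]) C) := isMeasPartition_pPre (hf.iterate _) hC
    calc cEnt μ (dynJoin f R (m + 2)) (dynJoin f C (m + 2))
        = cEnt μ (pJoin (dynJoin f R (m + 1)) (pPre (f^[m + 1]) R)) (dynJoin f C (m + 2)) := by
          rw [← dynJoin_succ]
      _ ≤ cEnt μ (dynJoin f R (m + 1)) (dynJoin f C (m + 2))
            + cEnt μ (pPre (f^[m + 1]) R) (dynJoin f C (m + 2)) :=
          cEnt_pJoin_le μ hRm hRpre
      _ ≤ cEnt μ (dynJoin f R (m + 1)) (dynJoin f C (m + 1))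
            + cEnt μ (pPre (f^[m + 1]) R) (pPre (f^[m + 1]) C) := by
          apply add_le_add
          · exact cEnt_mono_cond μ hRm hCm hCm2 (fun D hD => by
              obtain ⟨B, hB, hsub⟩ := dynJoin_refines_prev D hD
              exact ⟨B, hB, hsub⟩)
          · exact cEnt_mono_cond μ hRpre hCpre hCm2 (fun D hD => by
              obtain ⟨B, hB, hsub⟩ := dynJoin_refines_pPre D hD
              exact ⟨B, hB, hsub⟩)
      _ ≤ (m + 1) * cEnt μ R C + cEnt μ R C := by
          apply add_le_add ih
          rw [cEnt_pPre μ (hf.iterate _) (hsurj.iterate _) (map_iterate_eq μ hf hμ _) hR.1 hC.1]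
      _ = (↑(m + 1) + 1) * cEnt μ R C := by push_cast; ring

lemma master_ineq (μ : Measure X) [IsProbabilityMeasure μ] {f : X → X}
    (hf : Measurable f) (hsurj : Function.Surjective f) (hμ : Measure.map f μ = μ)
    {R C : Finset (Set X)} (hR : IsMeasPartition R) (hC : IsMeasPartition C) (m : ℕ) :
    partEntropy μ (dynJoin f R (m + 1))
      ≤ partEntropy μ (dynJoin f C (m + 1)) + (m + 1) * cEnt μ R C := by
  have hRm := isMeasPartition_dynJoin hf hR (m + 1)
  have hCm := isMeasPartition_dynJoin hf hC (m + 1)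
  calc partEntropy μ (dynJoin f R (m + 1))
      ≤ partEntropy μ (pJoin (dynJoin f R (m + 1)) (dynJoin f C (m + 1))) :=
        partEntropy_le_pJoin_left μ hRm hCm
    _ = partEntropy μ (dynJoin f C (m + 1))
          + cEnt μ (dynJoin f R (m + 1)) (dynJoin f C (m + 1)) := chain_rule μ hRm hCm
    _ ≤ partEntropy μ (dynJoin f C (m + 1)) + (m + 1) * cEnt μ R C := by
        have := cEnt_dynJoin_le μ hf hsurj hμ hR hC m
        linarith

section Fiber

variable {Y : Type*} [MetricSpace Y] [CompactSpace Y] [MeasurableSpace Y] [BorelSpace Y]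

lemma exists_inj_decomp {S : Y → Y} (hS : Continuous S)
    (hfin : ∀ x : Y, (S ⁻¹' {x}).Finite) :
    ∃ E : ℕ → Set Y, (∀ j, MeasurableSet (E j)) ∧ (Pairwise (Function.onFun Disjoint E)) ∧
      (⋃ j, E j) = Set.univ ∧ ∀ j, Set.InjOn S (E j) := by
  classical
  obtain ⟨b, hbc, hbne, hbb⟩ := TopologicalSpace.exists_countable_basis Y
  have hne : (insert ∅ b).Nonempty := ⟨∅, Set.mem_insert _ _⟩
  obtain ⟨u, hu⟩ := (hbc.insert ∅).exists_eq_range hne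
  have huopen : ∀ i, IsOpen (u i) := by
    intro i
    have hui : u i ∈ insert ∅ b := hu ▸ Set.mem_range_self i
    rcases Set.mem_insert_iff.1 hui with h | h
    · rw [h]; exact isOpen_empty
    · exact hbb.isOpen h
  set F : ℕ → ℕ → Set Y := fun i m => {x | ∀ y ∈ (u i)ᶜ, 1 / ((m : ℝ) + 1) ≤ dist x y}
    with hF
  have hFclosed : ∀ i m, IsClosed (F i m) := by
    intro i m
    have heq : F i m = ⋂ y ∈ (u i)ᶜ, {x | 1 / ((m : ℝ) + 1) ≤ dist x y} := by
      ext x; simp [hF, Set.mem_iInter]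
    rw [heq]
    exact isClosed_biInter fun y _ =>
      isClosed_le continuous_const (continuous_id.dist continuous_const)
  have hFsub : ∀ i m, F i m ⊆ u i := by
    intro i m x hx
    by_contra hxu
    have h1 := hx x hxu
    rw [dist_self] at h1
    have h2 : (0:ℝ) < 1 / ((m : ℝ) + 1) := by positivity
    linarith
  have hFcover : ∀ i x, x ∈ u i → ∃ m, x ∈ F i m := by
    intro i x hx
    obtain ⟨ε, hε, hball⟩ := Metric.isOpen_iff.1 (huopen i) x hx
    obtain ⟨m, hm⟩ := exists_nat_one_div_lt hε
    refine ⟨m, fun y hy => ?_⟩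
    by_contra hlt
    push_neg at hlt
    have : y ∈ Metric.ball x ε := by
      rw [Metric.mem_ball, dist_comm]
      linarith
    exact hy (hball this)
  set W : ℕ → ℕ → ℕ → ℕ → Set (Y × Y) := fun i m m' nn =>
    {p | p.1 ∈ F i m ∧ p.2 ∈ F i m' ∧ 1 / ((nn : ℝ) + 1) ≤ dist p.1 p.2 ∧ S p.1 = S p.2}
    with hW
  have hWclosed : ∀ i m m' nn, IsClosed (W i m m' nn) := by
    intro i m m' nn
    have heq : W i m m' nn = (Prod.fst ⁻¹' F i m) ∩ ((Prod.snd ⁻¹' F i m')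
        ∩ ({p : Y × Y | 1 / ((nn : ℝ) + 1) ≤ dist p.1 p.2}
          ∩ {p : Y × Y | S p.1 = S p.2})) := by
      ext p; simp [hW, Set.mem_inter_iff]
    rw [heq]
    refine IsClosed.inter ((hFclosed i m).preimage continuous_fst) ?_
    refine IsClosed.inter ((hFclosed i m').preimage continuous_snd) ?_
    refine IsClosed.inter ?_ (isClosed_eq (hS.comp continuous_fst) (hS.comp continuous_snd))
    exact isClosed_le continuous_const (continuous_fst.dist continuous_snd)
  set B : ℕ → Set Y := fun i => ⋃ m, ⋃ m', ⋃ nn, Prod.fst '' W i m m' nn with hB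
  have hBmeas : ∀ i, MeasurableSet (B i) := by
    intro i
    refine MeasurableSet.iUnion fun m => MeasurableSet.iUnion fun m' =>
      MeasurableSet.iUnion fun nn => ?_
    exact (((hWclosed i m m' nn).isCompact.image continuous_fst).isClosed).measurableSet
  set A : ℕ → Set Y := fun i => u i \ B i with hA
  have hAmeas : ∀ i, MeasurableSet (A i) := fun i =>
    ((huopen i).measurableSet).diff (hBmeas i)
  have hAinj : ∀ i, Set.InjOn S (A i) := by
    intro i x hx y hy hSxy
    by_contra hne
    have hd : 0 < dist x y := dist_pos.2 hne
    obtain ⟨m, hm⟩ := hFcover i x hx.1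
    obtain ⟨m', hm'⟩ := hFcover i y hy.1
    obtain ⟨nn, hnn⟩ := exists_nat_one_div_lt hd
    apply hx.2
    rw [hB]
    refine Set.mem_iUnion.2 ⟨m, Set.mem_iUnion.2 ⟨m', Set.mem_iUnion.2 ⟨nn, ?_⟩⟩⟩
    exact ⟨(x, y), ⟨hm, hm', le_of_lt hnn, hSxy⟩, rfl⟩
  have hAcover : ∀ x, ∃ i, x ∈ A i := by
    intro x
    have hfinx : ((S ⁻¹' {S x}) \ {x}).Finite := (hfin (S x)).subset Set.diff_subset
    have hVopen : IsOpen ((S ⁻¹' {S x}) \ {x})ᶜ := hfinx.isClosed.isOpen_compl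
    have hxV : x ∈ ((S ⁻¹' {S x}) \ {x})ᶜ := by
      intro hmem
      exact hmem.2 rfl
    obtain ⟨U, hUb, hxU, hUV⟩ := hbb.exists_subset_of_mem_open hxV hVopen
    have hUrange : U ∈ Set.range u := hu ▸ Set.mem_insert_of_mem _ hUb
    obtain ⟨i, rfl⟩ := hUrange
    refine ⟨i, hxU, ?_⟩
    intro hxB
    rw [hB] at hxB
    obtain ⟨m, hm⟩ := Set.mem_iUnion.1 hxB
    obtain ⟨m', hm'⟩ := Set.mem_iUnion.1 hm
    obtain ⟨nn, hnn⟩ := Set.mem_iUnion.1 hm'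
    obtain ⟨⟨x', y⟩, hpW, hfst⟩ := hnn
    obtain ⟨hp1, hp2, hp3, hp4⟩ := hpW
    cases hfst
    have hy : y ∈ (S ⁻¹' {S x'}) \ {x'} := by
      constructor
      · simp [hp4.symm]
      · intro hyx
        simp only [Set.mem_singleton_iff] at hyx
        rw [hyx, dist_self] at hp3
        have : (0:ℝ) < 1 / ((nn : ℝ) + 1) := by positivity
        linarith
    exact (hUV (hFsub i m' hp2)) hy
  refine ⟨disjointed A, fun j => MeasurableSet.disjointed hAmeas j,
    disjoint_disjointed A, ?_, fun j => (hAinj j).mono (disjointed_subset A j)⟩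
  rw [iUnion_disjointed]
  apply Set.eq_univ_of_forall
  intro x
  obtain ⟨i, hi⟩ := hAcover x
  exact Set.mem_iUnion.2 ⟨i, hi⟩

end Fiber

lemma partEntropy_map (ν : Measure X) {S : X → X} (hS : Measurable S)
    (hsurj : Function.Surjective S) {P : Finset (Set X)} (hP : ∀ A ∈ P, MeasurableSet A) :
    partEntropy (Measure.map S ν) P = partEntropy ν (pPre S P) := by
  classical
  erw [partEntropy, partEntropy, pPre, Finset.sum_image (g := (S ⁻¹' ·))
    (fun A _ B _ h => Set.preimage_injective.mpr hsurj h)]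
  apply Finset.sum_congr rfl
  intro A hA
  rw [Measure.map_apply hS (hP A hA)]

lemma dynJoin_subadd (μ : Measure X) [IsProbabilityMeasure μ] {T : X → X}
    (hT : Measurable T) (hsurj : Function.Surjective T) (hμ : Measure.map T μ = μ)
    {P : Finset (Set X)} (hP : IsMeasPartition P) (r s : ℕ) (hr : 1 ≤ r) (hs : 1 ≤ s) :
    partEntropy μ (dynJoin T P (r + s)) ≤
      partEntropy μ (dynJoin T P r) + partEntropy μ (dynJoin T P s) := by
  rw [dynJoin_add T P r s]
  have h1 := partEntropy_pJoin_le μ (isMeasPartition_dynJoin hT hP r)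
    (isMeasPartition_pPre (hT.iterate r) (isMeasPartition_dynJoin hT hP s))
  refine h1.trans ?_
  rw [partEntropy_pPre μ (hT.iterate r) (hsurj.iterate r) (map_iterate_eq μ hT hμ r)
    (isMeasPartition_dynJoin hT hP s).1]

lemma inf_subseq (a : ℕ → ℝ) (h0 : ∀ n, 0 ≤ a n)
    (hsub : ∀ r s, 1 ≤ r → 1 ≤ s → a (r + s) ≤ a r + a s)
    {K : ℕ} (hK : 1 ≤ K) {ε : ℝ} (hε : 0 < ε) :
    ∃ m : ℕ, a (m * K + 1) / ((m * K + 1 : ℕ) : ℝ)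
      ≤ (⨅ j : ℕ, a (j + 1) / ((j + 1 : ℕ) : ℝ)) + ε := by
  classical
  set I := ⨅ j : ℕ, a (j + 1) / ((j + 1 : ℕ) : ℝ) with hI
  have hlt : I < I + ε / 2 := by linarith
  obtain ⟨j₀, hj₀⟩ := exists_lt_of_ciInf_lt hlt
  set m₀ := j₀ + 1 with hm₀
  have hm₀pos : 0 < m₀ := Nat.succ_pos _
  have hm₀R : (0:ℝ) < (m₀ : ℝ) := by exact_mod_cast hm₀pos
  -- a (q * m₀) ≤ q * a m₀ for q ≥ 1
  have hmul : ∀ q : ℕ, a ((q + 1) * m₀) ≤ (q + 1 : ℝ) * a m₀ := by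
    intro q
    induction q with
    | zero => simp
    | succ q ih =>
      have h1 : (q + 2) * m₀ = (q + 1) * m₀ + m₀ := by ring
      have h2 : a ((q + 1) * m₀ + m₀) ≤ a ((q + 1) * m₀) + a m₀ :=
        hsub _ _ (Nat.mul_pos (Nat.succ_pos q) hm₀pos) hm₀pos
      rw [h1]
      push_cast
      push_cast at ih
      linarith
  -- a r ≤ r * a 1 for r ≥ 1
  have hlin : ∀ r : ℕ, a (r + 1) ≤ (r + 1 : ℝ) * a 1 := by
    intro r
    induction r with
    | zero => simp
    | succ r ih =>
      have h2 : a (r + 1 + 1) ≤ a (r + 1) + a 1 := hsub _ _ (by omega) le_rfl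
      push_cast
      push_cast at ih
      linarith
  obtain ⟨m, hm⟩ := exists_nat_ge (max (m₀ : ℝ) (2 * m₀ * (a 1 + 1) / ε))
  refine ⟨m, ?_⟩
  set N := m * K + 1 with hN
  have hNm : (m : ℝ) ≤ (N : ℝ) := by
    have : m ≤ N := by
      calc m = m * 1 := (Nat.mul_one m).symm
        _ ≤ m * K := Nat.mul_le_mul_left m hK
        _ ≤ N := Nat.le_succ _
    exact_mod_cast this
  have hNm₀ : m₀ ≤ N := by
    have h1 : (m₀ : ℝ) ≤ (m : ℝ) := le_trans (le_max_left _ _) hm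
    have h2 : (m₀ : ℝ) ≤ (N : ℝ) := h1.trans hNm
    exact_mod_cast h2
  have hNpos : 0 < N := Nat.succ_pos _
  have hNR : (0:ℝ) < (N : ℝ) := by exact_mod_cast hNpos
  obtain ⟨q, r, hNqr, hrm₀, hq1⟩ : ∃ q r, N = q * m₀ + r ∧ r < m₀ ∧ 1 ≤ q := by
    refine ⟨N / m₀, N % m₀, (Nat.div_add_mod' N m₀).symm, Nat.mod_lt _ hm₀pos,
      (Nat.one_le_div_iff hm₀pos).2 hNm₀⟩
  have hqR : (1:ℝ) ≤ (q:ℝ) := by exact_mod_cast hq1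
  have hqpos : (0:ℝ) < (q:ℝ) := lt_of_lt_of_le zero_lt_one hqR
  -- main bound on a N
  have hbound : a N ≤ (q : ℝ) * a m₀ + (m₀ : ℝ) * a 1 := by
    have hnn : (0:ℝ) ≤ (m₀ : ℝ) * a 1 := mul_nonneg (le_of_lt hm₀R) (h0 1)
    rcases Nat.eq_zero_or_pos r with hr0 | hrpos
    · have hNq : N = q * m₀ := by omega
      obtain ⟨q', rfl⟩ : ∃ q', q = q' + 1 := ⟨q - 1, by omega⟩
      rw [hNq]
      have h1 := hmul q'
      push_cast
      push_cast at h1 hnn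
      linarith
    · have hsplit : a N ≤ a (q * m₀) + a r := by
        rw [hNqr]
        exact hsub _ _ (Nat.mul_pos hq1 hm₀pos) hrpos
      obtain ⟨q', rfl⟩ : ∃ q', q = q' + 1 := ⟨q - 1, by omega⟩
      obtain ⟨r', rfl⟩ : ∃ r', r = r' + 1 := ⟨r - 1, by omega⟩
      have h1 := hmul q'
      have h2 := hlin r'
      have h3 : ((r' + 1 : ℕ) : ℝ) * a 1 ≤ (m₀ : ℝ) * a 1 := by
        apply mul_le_mul_of_nonneg_right _ (h0 1)
        exact_mod_cast le_of_lt hrm₀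
      push_cast
      push_cast at h1 h2 h3 hsplit hnn
      linarith
  -- divide by N
  have hqm₀le : (q : ℝ) * (m₀ : ℝ) ≤ (N : ℝ) := by
    have h : q * m₀ ≤ N := by omega
    exact_mod_cast h
  have hqm₀pos : (0:ℝ) < (q : ℝ) * (m₀ : ℝ) := by positivity
  have hstep1 : a N / (N : ℝ) ≤ ((q : ℝ) * a m₀ + (m₀ : ℝ) * a 1) / (N : ℝ) :=
    (div_le_div_iff_of_pos_right hNR).2 hbound
  have hterm1 : (q : ℝ) * a m₀ / (N : ℝ) ≤ a m₀ / (m₀ : ℝ) := by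
    have hs1 : (q : ℝ) * a m₀ / (N : ℝ) ≤ (q : ℝ) * a m₀ / ((q : ℝ) * (m₀ : ℝ)) :=
      div_le_div_of_nonneg_left (mul_nonneg (le_of_lt hqpos) (h0 m₀)) hqm₀pos hqm₀le
    rwa [mul_div_mul_left _ _ (ne_of_gt hqpos)] at hs1
  have hterm2 : (m₀ : ℝ) * a 1 / (N : ℝ) ≤ ε / 2 := by
    rw [div_le_iff₀ hNR]
    have hm2 : 2 * (m₀ : ℝ) * (a 1 + 1) / ε ≤ (N : ℝ) :=
      le_trans (le_trans (le_max_right _ _) hm) hNm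
    calc (m₀ : ℝ) * a 1 ≤ (m₀ : ℝ) * (a 1 + 1) :=
          mul_le_mul_of_nonneg_left (by linarith) (le_of_lt hm₀R)
      _ = ε / 2 * (2 * (m₀ : ℝ) * (a 1 + 1) / ε) := by
          field_simp
      _ ≤ ε / 2 * (N : ℝ) := by
          apply mul_le_mul_of_nonneg_left hm2 (by linarith)
  have hm₀I : a m₀ / (m₀ : ℝ) < I + ε / 2 := by
    have hc : ((j₀ + 1 : ℕ) : ℝ) = (m₀ : ℝ) := by rw [hm₀]
    rw [← hc]
    exact hj₀
  have hadd : ((q : ℝ) * a m₀ + (m₀ : ℝ) * a 1) / (N : ℝ)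
      = (q : ℝ) * a m₀ / (N : ℝ) + (m₀ : ℝ) * a 1 / (N : ℝ) := add_div _ _ _
  rw [hadd] at hstep1
  linarith


end KSProof

open KSProof

/-- Pushing a `T`-invariant measure forward under a commuting finite-to-one continuous
surjection `S` preserves `T`-invariance and the measure-theoretic entropy of `T`. -/
theorem ksEntropy_map_finite_to_one
    {X : Type*} [MetricSpace X] [CompactSpace X] [MeasurableSpace X] [BorelSpace X]
    (T S : X → X) (hT : Continuous T) (hS : Continuous S)
    (hTsurj : Function.Surjective T) (hSsurj : Function.Surjective S)
    (hTS : T ∘ S = S ∘ T)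
    (hfin : ∀ x : X, (S ⁻¹' {x}).Finite)
    (ν : Measure X) [IsProbabilityMeasure ν] (hν : Measure.map T ν = ν) :
    Measure.map T (Measure.map S ν) = Measure.map S ν ∧
      ksEntropy (Measure.map S ν) T = ksEntropy ν T := by
  classical
  have hTm : Measurable T := hT.measurable
  have hSm : Measurable S := hS.measurable
  have hmap : Measure.map T (Measure.map S ν) = Measure.map S ν := by
    rw [Measure.map_map hTm hSm, hTS, ← Measure.map_map hSm hTm, hν]
  refine ⟨hmap, ?_⟩
  haveI hμP : IsProbabilityMeasure (Measure.map S ν) :=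
    Measure.isProbabilityMeasure_map hSm.aemeasurable
  have hXne : Nonempty X := by
    by_contra h
    rw [not_nonempty_iff] at h
    have h1 : ν Set.univ = 1 := measure_univ
    rw [Set.univ_eq_empty_iff.2 h, measure_empty] at h1
    exact zero_ne_one h1
  have hc0 : ∀ x, T (S x) = S (T x) := fun x => congrFun hTS x
  have hcomm : ∀ (i : ℕ) (x : X), T^[i] (S x) = S (T^[i] x) := by
    intro i
    induction i with
    | zero => intro x; simp
    | succ i ih =>
      intro x
      rw [Function.iterate_succ_apply, Function.iterate_succ_apply, hc0 x, ih (T x)]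
  -- easy direction: per-partition identification
  have key_easy : ∀ Q : Finset (Set X), IsMeasPartition Q →
      (⨅ n : ℕ, partEntropy (Measure.map S ν) (dynJoin T Q (n + 1)) / (n + 1) : ℝ) =
      ⨅ n : ℕ, partEntropy ν (dynJoin T (pPre S Q) (n + 1)) / (n + 1) := by
    intro Q hQ
    apply congrArg iInf
    funext n
    rw [partEntropy_map ν hSm hSsurj (isMeasPartition_dynJoin hTm hQ (n + 1)).1,
      pPre_dynJoin hcomm Q (n + 1)]
  -- hard direction
  have key_hard : ∀ P : Finset (Set X), IsMeasPartition P → ∀ ε : ℝ, 0 < ε →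
      ∃ Q, IsMeasPartition Q ∧
        (⨅ n : ℕ, partEntropy ν (dynJoin T P (n + 1)) / (n + 1)) ≤
        (⨅ n : ℕ, partEntropy (Measure.map S ν) (dynJoin T Q (n + 1)) / (n + 1)) + ε := by
    intro P hP ε hε
    obtain ⟨E, hEmeas, hEdisj, hEcover, hEinj⟩ := exists_inj_decomp hS hfin
    set FF : ℕ → Set X := fun k => (⋃ j : Fin k, E j)ᶜ with hFF
    have hFFmeas : ∀ k, MeasurableSet (FF k) :=
      fun k => (MeasurableSet.iUnion fun j : Fin k => hEmeas j).compl
    have hFFtend : Filter.Tendsto (fun k => ν (FF k)) Filter.atTop (nhds 0) := by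
      have hanti : Antitone FF := by
        intro k l hkl
        apply Set.compl_subset_compl.2
        intro x hx
        obtain ⟨j, hj⟩ := Set.mem_iUnion.1 hx
        exact Set.mem_iUnion.2 ⟨Fin.castLE hkl j, hj⟩
      have hinter : (⋂ k, FF k) = ∅ := by
        rw [Set.eq_empty_iff_forall_notMem]
        intro x hx
        have hxuniv : x ∈ ⋃ j, E j := hEcover ▸ Set.mem_univ x
        obtain ⟨j, hj⟩ := Set.mem_iUnion.1 hxuniv
        exact (Set.mem_iInter.1 hx (j + 1)) (Set.mem_iUnion.2 ⟨⟨j, Nat.lt_succ_self j⟩, hj⟩)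
      have h := tendsto_measure_iInter_atTop (μ := ν)
        (fun k => (hFFmeas k).nullMeasurableSet) hanti ⟨0, measure_ne_top ν _⟩
      rw [hinter, measure_empty] at h
      exact h
    have hPne : P.Nonempty := by
      obtain ⟨A, hA, _⟩ := part_exists_mem hP (Classical.arbitrary X)
      exact ⟨A, hA⟩
    have hlogP : (0:ℝ) ≤ Real.log P.card := Real.log_nonneg (by
      exact_mod_cast Finset.card_pos.2 hPne)
    set δ := ε / 3 / (Real.log P.card + 1) with hδ
    have hδpos : 0 < δ := div_pos (by linarith) (by linarith)
    have hev : ∃ k, (ν (FF k)).toReal < δ := by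
      have h1 : Filter.Tendsto (fun k => (ν (FF k)).toReal) Filter.atTop (nhds 0) := by
        have h2 := (ENNReal.tendsto_toReal (a := 0) (by simp)).comp hFFtend
        simpa [Function.comp_def] using h2
      exact (h1.eventually_lt_const hδpos).exists
    obtain ⟨k, hk⟩ := hev
    obtain ⟨K₀, hK₀⟩ := exists_nat_ge (3 * Real.log (k + 1) / ε)
    set K := K₀ + 1 with hKdef
    have hK1 : 1 ≤ K := Nat.succ_le_succ (Nat.zero_le _)
    have hKpos : (0:ℝ) < (K : ℝ) := by exact_mod_cast Nat.succ_pos K₀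
    have hlogk0 : (0:ℝ) ≤ Real.log ((k:ℝ) + 1) := Real.log_nonneg (by
      have := Nat.cast_nonneg (α := ℝ) k
      linarith)
    have hlogk : Real.log ((k:ℝ) + 1) / (K:ℝ) ≤ ε / 3 := by
      rw [div_le_iff₀ hKpos]
      have h1 : 3 * Real.log ((k:ℝ) + 1) / ε ≤ (K : ℝ) := by
        have h2 : (K₀:ℝ) ≤ (K:ℝ) := by exact_mod_cast Nat.le_succ K₀
        push_cast at hK₀
        linarith
      rw [div_le_iff₀ hε] at h1
      linarith
    set R := dynJoin T P K with hRdef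
    have hRpart : IsMeasPartition R := isMeasPartition_dynJoin hTm hP K
    have hRne : R.Nonempty := by
      obtain ⟨A, hA, _⟩ := part_exists_mem hRpart (Classical.arbitrary X)
      exact ⟨A, hA⟩
    set G : Set X × Fin k → Set X := fun p => S '' (p.1 ∩ E p.2) with hG
    have hGmeas : ∀ p ∈ R ×ˢ (Finset.univ : Finset (Fin k)), MeasurableSet (G p) := by
      rintro ⟨A, j⟩ hp
      simp only [Finset.mem_product] at hp
      exact MeasurableSet.image_of_continuousOn_injOn
        ((hRpart.1 A hp.1).inter (hEmeas j)) hS.continuousOn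
        ((hEinj j).mono Set.inter_subset_right)
    obtain ⟨Q, hQpart, hQsides⟩ := exists_atoms _ G hGmeas
    refine ⟨Q, hQpart, ?_⟩
    have hQpre : IsMeasPartition (pPre S Q) := isMeasPartition_pPre hSm hQpart
    set Efin : Finset (Set X) := (Finset.univ.image fun j : Fin k => E j) ∪ {FF k}
      with hEfin
    have hEfinpart : IsMeasPartition Efin := by
      refine ⟨?_, ?_, ?_⟩
      · intro A hA
        rcases Finset.mem_union.1 hA with h | h
        · obtain ⟨j, _, rfl⟩ := Finset.mem_image.1 h
          exact hEmeas j
        · rw [Finset.mem_singleton.1 h]; exact hFFmeas k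
      · apply Set.eq_univ_of_forall
        intro x
        by_cases hx : x ∈ ⋃ j : Fin k, E j
        · obtain ⟨j, hj⟩ := Set.mem_iUnion.1 hx
          exact Set.mem_biUnion
            (Finset.mem_union_left _ (Finset.mem_image.2 ⟨j, Finset.mem_univ j, rfl⟩)) hj
        · exact Set.mem_biUnion (Finset.mem_union_right _ (Finset.mem_singleton_self _)) hx
      · intro A hA B hB hne
        rw [Set.eq_empty_iff_forall_notMem]
        rintro x ⟨hxA, hxB⟩
        apply hne
        rcases Finset.mem_union.1 hA with h1 | h1 <;> rcases Finset.mem_union.1 hB with h2 | h2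
        · obtain ⟨j1, _, rfl⟩ := Finset.mem_image.1 h1
          obtain ⟨j2, _, rfl⟩ := Finset.mem_image.1 h2
          by_cases hj : (j1 : ℕ) = (j2 : ℕ)
          · exact congrArg E hj
          · exact absurd hxB (Set.disjoint_left.1 (hEdisj hj) hxA)
        · obtain ⟨j1, _, rfl⟩ := Finset.mem_image.1 h1
          rw [Finset.mem_singleton.1 h2] at hxB
          exact absurd (Set.mem_iUnion.2 ⟨j1, hxA⟩) hxB
        · obtain ⟨j2, _, rfl⟩ := Finset.mem_image.1 h2
          rw [Finset.mem_singleton.1 h1] at hxA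
          exact absurd (Set.mem_iUnion.2 ⟨j2, hxB⟩) hxA
        · rw [Finset.mem_singleton.1 h1, Finset.mem_singleton.1 h2]
    have hkey : ∀ D ∈ pJoin Efin (pPre S Q),
        (∀ A ∈ R, A ∩ D = D ∨ A ∩ D = ∅) ∨ D ⊆ FF k := by
      intro D hD
      obtain ⟨e, he, B', hB', rfl⟩ := mem_pJoin.1 hD
      obtain ⟨Bq, hBq, rfl⟩ := mem_pPre.1 hB'
      rcases Finset.mem_union.1 he with him | hsing
      · obtain ⟨j, _, rfl⟩ := Finset.mem_image.1 him
        left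
        intro A hA
        by_cases hex : (A ∩ (E j ∩ S ⁻¹' Bq)).Nonempty
        · left
          obtain ⟨x₀, hx₀A, hx₀E, hx₀B⟩ := hex
          have hside := hQsides Bq hBq (A, j)
            (Finset.mem_product.2 ⟨hA, Finset.mem_univ j⟩)
          have hBsub : Bq ⊆ G (A, j) := by
            rcases hside with h | h
            · exact h
            · exact absurd (h hx₀B) (by
                intro hcon
                exact hcon ⟨x₀, ⟨hx₀A, hx₀E⟩, rfl⟩)
          apply Set.eq_of_subset_of_subset Set.inter_subset_right
          rintro x ⟨hxE, hxB⟩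
          have hSx : S x ∈ G (A, j) := hBsub hxB
          obtain ⟨a, ⟨haA, haE⟩, hSa⟩ := hSx
          have hxa : x = a := hEinj j hxE haE hSa.symm
          exact ⟨by rw [hxa]; exact haA, hxE, hxB⟩
        · right
          rw [Set.not_nonempty_iff_eq_empty] at hex
          exact hex
      · right
        rw [Finset.mem_singleton.1 hsing]
        exact Set.inter_subset_left
    set c := cEnt ν R (pPre S Q) with hcdef
    have hc_nonneg : 0 ≤ c := cEnt_nonneg ν _ _
    have hcb : c ≤ Real.log ((k:ℝ) + 1) + (ν (FF k)).toReal * ((K:ℝ) * Real.log P.card) := by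
      have h1 : c ≤ cEnt ν (pJoin R Efin) (pPre S Q) := cEnt_mono_left ν hRpart hEfinpart
      have h2 : cEnt ν (pJoin R Efin) (pPre S Q)
          = cEnt ν Efin (pPre S Q) + cEnt ν R (pJoin Efin (pPre S Q)) :=
        cEnt_pJoin_chain ν hRpart hEfinpart hQpre
      have h3 : cEnt ν Efin (pPre S Q) ≤ partEntropy ν Efin :=
        cEnt_le_partEntropy ν hEfinpart hQpre
      have h4 : partEntropy ν Efin ≤ Real.log Efin.card :=
        partEntropy_le_log_card ν hEfinpart
      have h5 : Real.log (Efin.card : ℝ) ≤ Real.log ((k:ℝ) + 1) := by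
        have hpos : (0:ℝ) < (Efin.card : ℝ) := by
          have : FF k ∈ Efin := Finset.mem_union_right _ (Finset.mem_singleton_self _)
          exact_mod_cast Finset.card_pos.2 ⟨FF k, this⟩
        apply Real.log_le_log hpos
        have hcard : Efin.card ≤ k + 1 := by
          refine le_trans (Finset.card_union_le _ _) ?_
          have hi : (Finset.univ.image fun j : Fin k => E j).card ≤ k := by
            refine le_trans (Finset.card_image_le) ?_
            simp
          simp only [Finset.card_singleton]
          omega
        exact_mod_cast hcard
      have h6 : cEnt ν R (pJoin Efin (pPre S Q)) ≤ (ν (FF k)).toReal * Real.log R.card :=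
        cEnt_le_of_locally_const ν hRpart (isMeasPartition_pJoin hEfinpart hQpre)
          hRne (hFFmeas k) hkey
      have h7 : Real.log (R.card : ℝ) ≤ (K:ℝ) * Real.log P.card := by
        have hRcard : R.card ≤ P.card ^ K := by
          rw [hRdef, dynJoin]
          refine le_trans (Finset.card_image_le) ?_
          rw [Fintype.card_piFinset]
          simp
        have hRpos : (0:ℝ) < (R.card : ℝ) := by
          exact_mod_cast Finset.card_pos.2 hRne
        calc Real.log (R.card : ℝ) ≤ Real.log ((P.card : ℝ) ^ K) := by
              apply Real.log_le_log hRpos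
              exact_mod_cast hRcard
          _ = (K:ℝ) * Real.log P.card := by rw [Real.log_pow]
      have h8 : (ν (FF k)).toReal * Real.log (R.card : ℝ)
          ≤ (ν (FF k)).toReal * ((K:ℝ) * Real.log P.card) :=
        mul_le_mul_of_nonneg_left h7 ENNReal.toReal_nonneg
      linarith
    -- master chain
    have hbelow : BddBelow (Set.range fun n : ℕ =>
        partEntropy ν (dynJoin T P (n + 1)) / (n + 1)) := by
      refine ⟨0, ?_⟩
      rintro x ⟨n, rfl⟩
      exact div_nonneg (partEntropy_nonneg ν _) (by positivity)
    have hmaster : ∀ m : ℕ,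
        (⨅ n : ℕ, partEntropy ν (dynJoin T P (n + 1)) / (n + 1))
          ≤ partEntropy (Measure.map S ν) (dynJoin T Q (m * K + 1))
              / ((m * K + 1 : ℕ) : ℝ) + c / (K:ℝ) := by
      intro m
      have hfm : Measurable (T^[K]) := hTm.iterate K
      have hfsurj : Function.Surjective (T^[K]) := hTsurj.iterate K
      have hfinv : Measure.map (T^[K]) ν = ν := map_iterate_eq ν hTm hν K
      have hMaster := master_ineq ν hfm hfsurj hfinv hRpart hQpre m
      have hiter : dynJoin (T^[K]) R (m + 1) = dynJoin T P ((m + 1) * K) := by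
        rw [hRdef]; exact dynJoin_iterate T P (by omega) (m + 1)
      have href : partEntropy ν (dynJoin (T^[K]) (pPre S Q) (m + 1))
          ≤ partEntropy ν (dynJoin T (pPre S Q) (m * K + 1)) := by
        apply partEntropy_mono_refine ν (isMeasPartition_dynJoin hTm hQpre _)
          (isMeasPartition_dynJoin hfm hQpre _)
        intro A hA hAne
        refine dynJoin_iterate_refines (fun j => ?_) A hA hAne
        have hj := j.2
        calc K * (j:ℕ) ≤ K * m := Nat.mul_le_mul_left K (by omega)
          _ < m * K + 1 := by rw [Nat.mul_comm]; omega
      have hpush : partEntropy ν (dynJoin T (pPre S Q) (m * K + 1))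
          = partEntropy (Measure.map S ν) (dynJoin T Q (m * K + 1)) := by
        rw [partEntropy_map ν hSm hSsurj (isMeasPartition_dynJoin hTm hQpart _).1,
          pPre_dynJoin hcomm]
      have hstep : partEntropy ν (dynJoin T P ((m + 1) * K))
          ≤ partEntropy (Measure.map S ν) (dynJoin T Q (m * K + 1)) + ((m:ℝ) + 1) * c := by
        rw [← hiter]
        refine hMaster.trans ?_
        have := href.trans_eq hpush
        linarith
      have hposmK : 0 < (m + 1) * K := Nat.mul_pos (Nat.succ_pos m) (by omega)
      have hidx : ((m + 1) * K - 1) + 1 = (m + 1) * K := by omega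
      have hinf_le : (⨅ n : ℕ, partEntropy ν (dynJoin T P (n + 1)) / (n + 1))
          ≤ partEntropy ν (dynJoin T P ((m + 1) * K)) / (((m + 1) * K : ℕ) : ℝ) := by
        have h := ciInf_le hbelow ((m + 1) * K - 1)
        refine h.trans_eq ?_
        have hcast : ((((m + 1) * K - 1 : ℕ) : ℝ) + 1) = (((m + 1) * K : ℕ) : ℝ) := by
          rw [← Nat.cast_add_one, hidx]
        rw [hidx, hcast]
      have hdenpos : (0:ℝ) < (((m + 1) * K : ℕ) : ℝ) := by exact_mod_cast hposmK
      have hdenpos2 : (0:ℝ) < ((m * K + 1 : ℕ) : ℝ) := by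
        have : 0 < m * K + 1 := Nat.succ_pos _
        exact_mod_cast this
      have hdle : ((m * K + 1 : ℕ) : ℝ) ≤ (((m + 1) * K : ℕ) : ℝ) := by
        have : m * K + 1 ≤ (m + 1) * K := by
          have : (m + 1) * K = m * K + K := by ring
          omega
        exact_mod_cast this
      have harith : partEntropy ν (dynJoin T P ((m + 1) * K)) / (((m + 1) * K : ℕ) : ℝ)
          ≤ partEntropy (Measure.map S ν) (dynJoin T Q (m * K + 1))
              / ((m * K + 1 : ℕ) : ℝ) + c / (K:ℝ) := by
        have hd1 : partEntropy ν (dynJoin T P ((m + 1) * K)) / (((m + 1) * K : ℕ) : ℝ)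
            ≤ (partEntropy (Measure.map S ν) (dynJoin T Q (m * K + 1)) + ((m:ℝ) + 1) * c)
                / (((m + 1) * K : ℕ) : ℝ) := (div_le_div_iff_of_pos_right hdenpos).2 hstep
        have hd2 : (partEntropy (Measure.map S ν) (dynJoin T Q (m * K + 1))
              + ((m:ℝ) + 1) * c) / (((m + 1) * K : ℕ) : ℝ)
            = partEntropy (Measure.map S ν) (dynJoin T Q (m * K + 1))
                / (((m + 1) * K : ℕ) : ℝ)
              + ((m:ℝ) + 1) * c / (((m + 1) * K : ℕ) : ℝ) := add_div _ _ _
        have hd3 : partEntropy (Measure.map S ν) (dynJoin T Q (m * K + 1))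
              / (((m + 1) * K : ℕ) : ℝ)
            ≤ partEntropy (Measure.map S ν) (dynJoin T Q (m * K + 1))
              / ((m * K + 1 : ℕ) : ℝ) :=
          div_le_div_of_nonneg_left (partEntropy_nonneg _ _) hdenpos2 hdle
        have hd4 : ((m:ℝ) + 1) * c / (((m + 1) * K : ℕ) : ℝ) = c / (K:ℝ) := by
          have hcast2 : (((m + 1) * K : ℕ) : ℝ) = ((m:ℝ) + 1) * (K:ℝ) := by push_cast; ring
          rw [hcast2, mul_div_mul_left _ _ (by positivity : (m:ℝ) + 1 ≠ 0)]
        rw [hd2, hd4] at hd1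
        linarith
      exact hinf_le.trans harith
    -- subsequence along multiples
    have hsubadd : ∀ r s : ℕ, 1 ≤ r → 1 ≤ s →
        partEntropy (Measure.map S ν) (dynJoin T Q (r + s))
          ≤ partEntropy (Measure.map S ν) (dynJoin T Q r)
            + partEntropy (Measure.map S ν) (dynJoin T Q s) := by
      intro r s hr hs
      exact dynJoin_subadd (Measure.map S ν) hTm hTsurj hmap hQpart r s hr hs
    obtain ⟨m, hm⟩ := inf_subseq (fun N => partEntropy (Measure.map S ν) (dynJoin T Q N))
      (fun N => partEntropy_nonneg _ _) hsubadd hK1 (show (0:ℝ) < ε / 3 by linarith)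
    have hinfeq : (⨅ j : ℕ, partEntropy (Measure.map S ν) (dynJoin T Q (j + 1))
          / ((j + 1 : ℕ) : ℝ))
        = ⨅ n : ℕ, partEntropy (Measure.map S ν) (dynJoin T Q (n + 1)) / ((n:ℝ) + 1) := by
      apply congrArg iInf
      funext n
      norm_num
    have hck : c / (K:ℝ) ≤ ε / 3 + ε / 3 := by
      have hd : c / (K:ℝ) ≤ (Real.log ((k:ℝ) + 1)
          + (ν (FF k)).toReal * ((K:ℝ) * Real.log P.card)) / (K:ℝ) :=
        (div_le_div_iff_of_pos_right hKpos).2 hcb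
      have he : (Real.log ((k:ℝ) + 1) + (ν (FF k)).toReal * ((K:ℝ) * Real.log P.card)) / (K:ℝ)
          = Real.log ((k:ℝ) + 1) / (K:ℝ) + (ν (FF k)).toReal * Real.log P.card := by
        field_simp
      have hf2 : (ν (FF k)).toReal * Real.log P.card ≤ ε / 3 := by
        have h1 : (ν (FF k)).toReal * Real.log P.card
            ≤ (ν (FF k)).toReal * (Real.log P.card + 1) :=
          mul_le_mul_of_nonneg_left (by linarith) ENNReal.toReal_nonneg
        have h2 : (ν (FF k)).toReal * (Real.log P.card + 1) ≤ δ * (Real.log P.card + 1) :=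
          mul_le_mul_of_nonneg_right (le_of_lt hk) (by linarith)
        have h3 : δ * (Real.log P.card + 1) = ε / 3 := by
          rw [hδ]
          field_simp
        linarith
      rw [he] at hd
      linarith
    calc (⨅ n : ℕ, partEntropy ν (dynJoin T P (n + 1)) / (n + 1))
        ≤ partEntropy (Measure.map S ν) (dynJoin T Q (m * K + 1))
            / ((m * K + 1 : ℕ) : ℝ) + c / (K:ℝ) := hmaster m
      _ ≤ ((⨅ j : ℕ, partEntropy (Measure.map S ν) (dynJoin T Q (j + 1))
            / ((j + 1 : ℕ) : ℝ)) + ε / 3) + (ε / 3 + ε / 3) := add_le_add hm hck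
      _ = (⨅ n : ℕ, partEntropy (Measure.map S ν) (dynJoin T Q (n + 1)) / ((n:ℝ) + 1)) + ε := by
          rw [hinfeq]; ring
  -- assemble the suprema
  haveI hPartNe : Nonempty {P : Finset (Set X) // IsMeasPartition P} := by
    refine ⟨⟨{Set.univ}, ?_, ?_, ?_⟩⟩
    · intro A hA
      rw [Finset.mem_singleton.1 hA]
      exact MeasurableSet.univ
    · apply Set.eq_univ_of_forall
      intro x
      exact Set.mem_biUnion (Finset.mem_singleton_self _) (Set.mem_univ x)
    · intro A hA B hB hne
      rw [Finset.mem_singleton.1 hA, Finset.mem_singleton.1 hB] at hne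
      exact absurd rfl hne
  unfold ksEntropy
  set f : {P : Finset (Set X) // IsMeasPartition P} → ℝ := fun P =>
    ⨅ n : ℕ, partEntropy (Measure.map S ν) (dynJoin T P.1 (n + 1)) / (n + 1) with hfdef
  set g : {P : Finset (Set X) // IsMeasPartition P} → ℝ := fun P =>
    ⨅ n : ℕ, partEntropy ν (dynJoin T P.1 (n + 1)) / (n + 1) with hgdef
  have hfg : ∀ P : {P : Finset (Set X) // IsMeasPartition P},
      ∃ P' : {P : Finset (Set X) // IsMeasPartition P}, f P = g P' := fun P =>
    ⟨⟨pPre S P.1, isMeasPartition_pPre hSm P.2⟩, key_easy P.1 P.2⟩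
  have hrange_sub : Set.range f ⊆ Set.range g := by
    rintro x ⟨P, rfl⟩
    obtain ⟨P', h⟩ := hfg P
    exact ⟨P', h.symm⟩
  by_cases hbdd : BddAbove (Set.range g)
  · have hbddf : BddAbove (Set.range f) := hbdd.mono hrange_sub
    apply le_antisymm
    · apply ciSup_le
      intro P
      obtain ⟨P', h⟩ := hfg P
      rw [h]
      exact le_ciSup hbdd P'
    · apply ciSup_le
      intro P
      apply le_of_forall_pos_le_add
      intro ε hεp
      obtain ⟨Q, hQ, hle⟩ := key_hard P.1 P.2 ε hεp
      calc g P ≤ f ⟨Q, hQ⟩ + ε := hle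
        _ ≤ (⨆ P, f P) + ε := add_le_add (le_ciSup hbddf _) le_rfl
  · have hbddf : ¬ BddAbove (Set.range f) := by
      intro hf
      apply hbdd
      obtain ⟨Mf, hMf⟩ := hf
      refine ⟨Mf + 1, ?_⟩
      rintro x ⟨P, rfl⟩
      obtain ⟨Q, hQ, hle⟩ := key_hard P.1 P.2 1 one_pos
      exact hle.trans (add_le_add (hMf ⟨⟨Q, hQ⟩, rfl⟩) le_rfl)
    rw [Real.iSup_of_not_bddAbove hbddf, Real.iSup_of_not_bddAbove hbdd]
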